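/- arXiv:math/0404048 — 3 statements merged into one kernel-verified Lean document; each statement's English description precedes it below -/
import Mathlib

section
/- Let $a_1,\ldots,a_{k+1}$ be positive reals and let $e_1,\ldots,e_k$ be the edges of a tree on vertex set $\{1,\ldots,k+1\}$. Define a $k\times k$ matrix $M$ by: $M(i,i) = a_r + a_s$ if $e_i$ joins vertices $r$ and $s$; $M(i,j) = a_r$ if $i \neq j$ and $e_i, e_j$ are distinct edges meeting at vertex $r$; and $M(i,j) = 0$ if $e_i$ and $e_j$ share no vertex. Then $\det M = \left(\prod_{i=1}^{k+1} a_i\right)\left(\sum_{i=1}^{k+1} a_i^{-1}\right)$. -/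
set_option linter.unusedSectionVars false

open Finset Matrix

namespace DetTreeAux

variable {ι V : Type} [Fintype ι] [DecidableEq ι] [Fintype V] [DecidableEq V]

/-- unsigned incidence matrix of the edge family `e` -/
def Nm (e : ι → V × V) : Matrix ι V ℝ :=
  Matrix.of fun i v => if v = (e i).1 ∨ v = (e i).2 then (1 : ℝ) else 0

/-- the matrix `N * diagonal a * Nᵀ` -/
def Mm (e : ι → V × V) (a : V → ℝ) : Matrix ι ι ℝ :=
  Matrix.of fun i j => ∑ v, a v * Nm e i v * Nm e j v

lemma Mm_symm (e : ι → V × V) (a : V → ℝ) (i j : ι) : Mm e a i j = Mm e a j i := by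
  unfold Mm
  simp only [Matrix.of_apply]
  exact Finset.sum_congr rfl fun v _ => by ring

lemma Nm_split (e : ι → V × V) (hloop : ∀ i, (e i).1 ≠ (e i).2) (i : ι) (v : V) :
    Nm e i v = (if v = (e i).1 then (1:ℝ) else 0) + (if v = (e i).2 then 1 else 0) := by
  unfold Nm
  simp only [Matrix.of_apply]
  by_cases h1 : v = (e i).1
  · by_cases h2 : v = (e i).2
    · exact absurd (h1.symm.trans h2) (hloop i)
    · simp [h1, h2, hloop i]
  · simp [h1]

lemma Mm_row (e : ι → V × V) (hloop : ∀ i, (e i).1 ≠ (e i).2) (a : V → ℝ) (i j : ι) :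
    Mm e a i j = a (e i).1 * Nm e j (e i).1 + a (e i).2 * Nm e j (e i).2 := by
  unfold Mm
  simp only [Matrix.of_apply]
  have key : ∀ v, a v * Nm e i v * Nm e j v =
      (if v = (e i).1 then a v * Nm e j v else 0) +
      (if v = (e i).2 then a v * Nm e j v else 0) := by
    intro v
    rw [Nm_split e hloop i v]
    split_ifs <;> ring
  rw [Finset.sum_congr rfl fun v _ => key v, Finset.sum_add_distrib]
  simp [Finset.sum_ite_eq']

lemma Mm_update_sub (e : ι → V × V) (a : V → ℝ) (p : V) (i j : ι) :
    Mm e (Function.update a p 0) i j = Mm e a i j - a p * Nm e i p * Nm e j p := by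
  unfold Mm
  simp only [Matrix.of_apply]
  have key : ∀ v, Function.update a p 0 v * Nm e i v * Nm e j v =
      a v * Nm e i v * Nm e j v - (if v = p then a p * Nm e i p * Nm e j p else 0) := by
    intro v
    by_cases hv : v = p
    · subst hv; simp
    · rw [Function.update_of_ne hv, if_neg hv, sub_zero]
  rw [Finset.sum_congr rfl fun v _ => key v, Finset.sum_sub_distrib]
  simp [Finset.sum_ite_eq']

/-- equivalence splitting off one index -/
def complEquiv (t : ι) : ({i : ι // i ≠ t} ⊕ Unit) ≃ ι where
  toFun := Sum.elim Subtype.val fun _ => t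
  invFun i := if h : i = t then Sum.inr () else Sum.inl ⟨i, h⟩
  left_inv := by
    rintro (⟨i, hi⟩ | ⟨⟩)
    · simp [hi]
    · simp
  right_inv i := by
    by_cases h : i = t <;> simp [h]

lemma det_eq_minor_mul_col (A : Matrix ι ι ℝ) (t : ι) (h : ∀ i, i ≠ t → A i t = 0) :
    A.det = (Matrix.of fun i j : {i : ι // i ≠ t} => A i.val j.val).det * A t t := by
  have h1 : A.submatrix (complEquiv t) (complEquiv t) =
      Matrix.fromBlocks (Matrix.of fun i j : {i : ι // i ≠ t} => A i.val j.val) 0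
        (Matrix.of fun (_ : Unit) (j : {i : ι // i ≠ t}) => A t j.val)
        (Matrix.of fun (_ _ : Unit) => A t t) := by
    ext x y
    rcases x with x | x <;> rcases y with y | y
    · simp [complEquiv, Matrix.fromBlocks]
    · simp [complEquiv, Matrix.fromBlocks, h _ x.prop]
    · simp [complEquiv, Matrix.fromBlocks]
    · simp [complEquiv, Matrix.fromBlocks]
  have h2 : (Matrix.of fun (_ _ : Unit) => A t t).det = A t t := by
    rw [Matrix.det_unique]; rfl
  calc A.det = (A.submatrix (complEquiv t) (complEquiv t)).det :=
        (Matrix.det_submatrix_equiv_self (complEquiv t) A).symm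
    _ = _ := by
        rw [h1, Matrix.det_fromBlocks_zero₁₂, h2]

lemma det_eq_minor_mul_row (A : Matrix ι ι ℝ) (t : ι) (h : ∀ j, j ≠ t → A t j = 0) :
    A.det = (Matrix.of fun i j : {i : ι // i ≠ t} => A i.val j.val).det * A t t := by
  rw [← Matrix.det_transpose A, det_eq_minor_mul_col Aᵀ t (fun i hi => h i hi)]
  have h2 : (Matrix.of fun i j : {i : ι // i ≠ t} => Aᵀ i.val j.val)
      = (Matrix.of fun i j : {i : ι // i ≠ t} => A i.val j.val)ᵀ := rfl
  rw [h2, Matrix.det_transpose]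
  rfl


section Leaf

variable (e : ι → V × V) (u p : V) (t : ι)

/-- endpoints of non-leaf edges avoid the leaf vertex -/
lemma hend_of_leaf (hleaf : ∀ i, (u = (e i).1 ∨ u = (e i).2) → i = t) :
    ∀ i : ι, i ≠ t → (e i).1 ≠ u ∧ (e i).2 ≠ u :=
  fun i hi => ⟨fun h => hi (hleaf i (Or.inl h.symm)), fun h => hi (hleaf i (Or.inr h.symm))⟩

/-- the edge family of the tree with the leaf `u` (and its edge `t`) removed -/
def subE (h : ∀ i : ι, i ≠ t → (e i).1 ≠ u ∧ (e i).2 ≠ u) :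
    {i : ι // i ≠ t} → {v : V // v ≠ u} × {v : V // v ≠ u} :=
  fun i => (⟨(e i.val).1, (h i.val i.prop).1⟩, ⟨(e i.val).2, (h i.val i.prop).2⟩)

lemma Nm_subE (h : ∀ i : ι, i ≠ t → (e i).1 ≠ u ∧ (e i).2 ≠ u)
    (i : {i : ι // i ≠ t}) (v : {v : V // v ≠ u}) :
    Nm (subE e u t h) i v = Nm e i.val v.val := by
  unfold Nm subE
  simp only [Matrix.of_apply]
  congr 1
  simp [Subtype.ext_iff]

lemma Nm_col_u (hut : e t = (u, p) ∨ e t = (p, u))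
    (hleaf : ∀ i, (u = (e i).1 ∨ u = (e i).2) → i = t) (j : ι) :
    Nm e j u = if j = t then 1 else 0 := by
  unfold Nm
  simp only [Matrix.of_apply]
  by_cases hj : j = t
  · subst hj
    rw [if_pos rfl, if_pos]
    rcases hut with h | h <;> rw [h]
    · exact Or.inl rfl
    · exact Or.inr rfl
  · rw [if_neg hj, if_neg]
    intro hc
    exact hj (hleaf j hc)

lemma Nm_t_p (hut : e t = (u, p) ∨ e t = (p, u)) : Nm e t p = 1 := by
  unfold Nm
  simp only [Matrix.of_apply]
  rw [if_pos]
  rcases hut with h | h <;> rw [h]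
  · exact Or.inr rfl
  · exact Or.inl rfl

lemma Mm_row_t (hloop : ∀ i, (e i).1 ≠ (e i).2)
    (hut : e t = (u, p) ∨ e t = (p, u))
    (hleaf : ∀ i, (u = (e i).1 ∨ u = (e i).2) → i = t) (a : V → ℝ) (j : ι) :
    Mm e a t j = a u * (if j = t then (1:ℝ) else 0) + a p * Nm e j p := by
  rcases hut with h | h
  · rw [Mm_row e hloop a t j, h]
    show a u * Nm e j u + a p * Nm e j p = _
    rw [Nm_col_u e u p t (Or.inl h) hleaf j]
  · rw [Mm_row e hloop a t j, h]
    show a p * Nm e j p + a u * Nm e j u = _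
    rw [Nm_col_u e u p t (Or.inr h) hleaf j]
    ring

lemma Mm_off_row (hut : e t = (u, p) ∨ e t = (p, u))
    (hleaf : ∀ i, (u = (e i).1 ∨ u = (e i).2) → i = t)
    (b c : V → ℝ) (h : ∀ v, v ≠ u → b v = c v) (i j : ι) (hi : i ≠ t) :
    Mm e b i j = Mm e c i j := by
  unfold Mm
  simp only [Matrix.of_apply]
  refine Finset.sum_congr rfl fun v _ => ?_
  by_cases hv : v = u
  · rw [hv, Nm_col_u e u p t hut hleaf i, if_neg hi]
    ring
  · rw [h v hv]

/-- the minor of `Mm` at a leaf edge is the `Mm` of the reduced tree -/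
lemma Mm_minor (hut : e t = (u, p) ∨ e t = (p, u))
    (hleaf : ∀ i, (u = (e i).1 ∨ u = (e i).2) → i = t) (b : V → ℝ) :
    (Matrix.of fun i j : {i : ι // i ≠ t} => Mm e b i.val j.val)
      = Mm (subE e u t (hend_of_leaf e u t hleaf)) (fun v => b v.val) := by
  ext i j
  simp only [Matrix.of_apply]
  unfold Mm
  simp only [Matrix.of_apply]
  have h1 : ∀ v : {v : V // v ≠ u},
      b v.val * Nm (subE e u t (hend_of_leaf e u t hleaf)) i v *
        Nm (subE e u t (hend_of_leaf e u t hleaf)) j v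
      = b v.val * Nm e i.val v.val * Nm e j.val v.val := by
    intro v
    rw [Nm_subE, Nm_subE]
  rw [Finset.sum_congr rfl fun v _ => h1 v]
  rw [← Finset.sum_subtype (Finset.univ.erase u) (by simp)
    (fun v => b v * Nm e i.val v * Nm e j.val v)]
  rw [← Finset.add_sum_erase Finset.univ _ (Finset.mem_univ u)]
  rw [Nm_col_u e u p t hut hleaf i.val, if_neg i.prop]
  ring

/-- splitting lemma at a leaf -/
lemma lemS (hloop : ∀ i, (e i).1 ≠ (e i).2)
    (hut : e t = (u, p) ∨ e t = (p, u)) (hup : u ≠ p)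
    (hleaf : ∀ i, (u = (e i).1 ∨ u = (e i).2) → i = t) (a : V → ℝ) :
    (Mm e a).det =
      a u * (Mm (subE e u t (hend_of_leaf e u t hleaf)) (fun v => a v.val)).det
        + (Mm e (Function.update a u 0)).det := by
  set a' := Function.update a u 0 with ha'
  have hapu : a' u = 0 := Function.update_self u 0 a
  have happ : a' p = a p := Function.update_of_ne (Ne.symm hup) 0 a
  have h1 : Mm e a = (Mm e a').updateRow t ((fun j => if j = t then a u else 0) + Mm e a' t) := by
    ext i j
    by_cases hi : i = t
    · rw [hi, Matrix.updateRow_self]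
      show Mm e a t j = (if j = t then a u else 0) + Mm e a' t j
      rw [Mm_row_t e u p t hloop hut hleaf a j, Mm_row_t e u p t hloop hut hleaf a' j,
        hapu, happ]
      split_ifs <;> ring
    · rw [Matrix.updateRow_ne hi]
      exact Mm_off_row e u p t hut hleaf a a'
        (fun v hv => (Function.update_of_ne hv 0 a).symm) i j hi
  rw [h1, Matrix.det_updateRow_add, Matrix.updateRow_eq_self]
  congr 1
  have hrowz : ∀ j, j ≠ t →
      ((Mm e a').updateRow t fun j => if j = t then a u else 0) t j = 0 := by
    intro j hj
    rw [Matrix.updateRow_self]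
    exact if_neg hj
  rw [det_eq_minor_mul_row _ t hrowz]
  have htt : ((Mm e a').updateRow t fun j => if j = t then a u else 0) t t = a u := by
    rw [Matrix.updateRow_self]
    exact if_pos rfl
  rw [htt]
  have hm : (Matrix.of fun i j : {i : ι // i ≠ t} =>
      ((Mm e a').updateRow t fun j => if j = t then a u else 0) i.val j.val)
      = Mm (subE e u t (hend_of_leaf e u t hleaf)) (fun v => a v.val) := by
    have h2 : (Matrix.of fun i j : {i : ι // i ≠ t} =>
        ((Mm e a').updateRow t fun j => if j = t then a u else 0) i.val j.val)
        = (Matrix.of fun i j : {i : ι // i ≠ t} => Mm e a' i.val j.val) := by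
      ext i j
      simp only [Matrix.of_apply]
      rw [Matrix.updateRow_ne i.prop]
    rw [h2, Mm_minor e u p t hut hleaf a']
    have harg : (fun v : {v : V // v ≠ u} => a' v.val) = fun v => a v.val :=
      funext fun v => Function.update_of_ne v.prop 0 a
    rw [harg]
  rw [hm, mul_comm]

/-- reduction lemma at a leaf whose weight vanishes -/
lemma lemR (hloop : ∀ i, (e i).1 ≠ (e i).2)
    (hut : e t = (u, p) ∨ e t = (p, u)) (hup : u ≠ p)
    (hleaf : ∀ i, (u = (e i).1 ∨ u = (e i).2) → i = t) (a : V → ℝ) (hau : a u = 0) :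
    (Mm e a).det = a p *
      (Mm (subE e u t (hend_of_leaf e u t hleaf))
        (fun v => Function.update a p 0 v.val)).det := by
  set L : Matrix ι ι ℝ :=
    Matrix.of fun i j => if j = i then (1:ℝ) else if j = t then -(Nm e i p) else 0 with hL
  have hrowzL : ∀ j, j ≠ t → L t j = 0 := by
    intro j hj
    simp only [hL, Matrix.of_apply]
    rw [if_neg hj, if_neg hj]
  have hdetL : L.det = 1 := by
    rw [det_eq_minor_mul_row L t hrowzL]
    have h1 : (Matrix.of fun i j : {i : ι // i ≠ t} => L i.val j.val)
        = (1 : Matrix {i : ι // i ≠ t} {i : ι // i ≠ t} ℝ) := by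
      ext i j
      simp only [Matrix.of_apply, hL]
      by_cases h : (j : ι) = i
      · have hij : i = j := Subtype.ext h.symm
        rw [if_pos h, hij, Matrix.one_apply_eq]
      · rw [if_neg h, if_neg j.prop, Matrix.one_apply_ne]
        intro hc
        exact h (congrArg Subtype.val hc.symm)
    rw [h1, Matrix.det_one]
    simp [hL]
  have hB : ∀ i j, (L * Mm e a) i j =
      Mm e a i j + (if i = t then 0 else -(Nm e i p)) * Mm e a t j := by
    intro i j
    rw [Matrix.mul_apply]
    have key : ∀ m, L i m * Mm e a m j =
        (if m = i then Mm e a i j else 0) +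
        (if m = t then (if i = t then 0 else -(Nm e i p)) * Mm e a t j else 0) := by
      intro m
      simp only [hL, Matrix.of_apply]
      by_cases h1 : m = i
      · subst h1
        by_cases h2 : m = t
        · subst h2
          simp
        · simp [h2]
      · rw [if_neg h1, if_neg h1]
        by_cases h2 : m = t
        · subst h2
          rw [if_pos rfl, if_pos rfl, if_neg (fun hc => h1 hc.symm), zero_add]
        · simp [h2]
    rw [Finset.sum_congr rfl fun m _ => key m, Finset.sum_add_distrib]
    simp [Finset.sum_ite_eq']
  have hdet2 : (L * Mm e a).det = (Mm e a).det := by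
    rw [Matrix.det_mul, hdetL, one_mul]
  have hNtp : Nm e t p = 1 := Nm_t_p e u p t hut
  have hcolz : ∀ i, i ≠ t → (L * Mm e a) i t = 0 := by
    intro i hi
    rw [hB, if_neg hi, Mm_symm e a i t, Mm_row_t e u p t hloop hut hleaf a i,
      Mm_row_t e u p t hloop hut hleaf a t, if_neg hi, if_pos rfl, hNtp, hau]
    ring
  have httB : (L * Mm e a) t t = a p := by
    rw [hB, if_pos rfl, Mm_row_t e u p t hloop hut hleaf a t, if_pos rfl, hNtp, hau]
    ring
  rw [← hdet2, det_eq_minor_mul_col _ t hcolz, httB]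
  have hminor : (Matrix.of fun i j : {i : ι // i ≠ t} => (L * Mm e a) i.val j.val)
      = Mm (subE e u t (hend_of_leaf e u t hleaf))
          (fun v => Function.update a p 0 v.val) := by
    rw [← Mm_minor e u p t hut hleaf (Function.update a p 0)]
    ext i j
    simp only [Matrix.of_apply]
    rw [hB, if_neg i.prop, Mm_row_t e u p t hloop hut hleaf a j.val, if_neg j.prop,
      Mm_update_sub e a p i.val j.val, hau]
    ring
  rw [hminor, mul_comm]


/-- combined splitting at a leaf -/
lemma lemStar (hloop : ∀ i, (e i).1 ≠ (e i).2)
    (hut : e t = (u, p) ∨ e t = (p, u)) (hup : u ≠ p)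
    (hleaf : ∀ i, (u = (e i).1 ∨ u = (e i).2) → i = t) (a : V → ℝ) :
    (Mm e a).det =
      a u * (Mm (subE e u t (hend_of_leaf e u t hleaf)) (fun v => a v.val)).det
        + a p * (Mm (subE e u t (hend_of_leaf e u t hleaf))
            (fun v => Function.update a p 0 v.val)).det := by
  rw [lemS e u p t hloop hut hup hleaf a,
    lemR e u p t hloop hut hup hleaf (Function.update a u 0) (Function.update_self u 0 a)]
  have h1 : Function.update a u 0 p = a p := Function.update_of_ne (Ne.symm hup) 0 a
  have h2 : (fun v : {v : V // v ≠ u} =>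
      Function.update (Function.update a u 0) p 0 v.val)
      = fun v : {v : V // v ≠ u} => Function.update a p 0 v.val := by
    funext v
    by_cases hv : v.val = p
    · rw [hv]
      simp
    · rw [Function.update_of_ne hv, Function.update_of_ne hv,
        Function.update_of_ne v.prop]
  rw [h1, h2]

end Leaf

section Helpers

lemma prod_subtype_univ (u : V) (b : V → ℝ) :
    ∏ v' : {v : V // v ≠ u}, b v'.val = ∏ v ∈ Finset.univ.erase u, b v :=
  (Finset.prod_subtype _ (by simp) _).symm

lemma sum_subtype_univ (u : V) (g : V → ℝ) :
    ∑ w' : {v : V // v ≠ u}, g w'.val = ∑ w ∈ Finset.univ.erase u, g w :=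
  (Finset.sum_subtype _ (by simp) _).symm

lemma prod_subtype_erase (u : V) (w : {v : V // v ≠ u}) (b : V → ℝ) :
    ∏ v' ∈ Finset.univ.erase w, b v'.val
      = ∏ v ∈ (Finset.univ.erase u).erase w.val, b v := by
  calc ∏ v' ∈ Finset.univ.erase w, b v'.val
      = ∏ v' ∈ Finset.univ.erase w, (if v' = w then 1 else b v'.val) :=
        Finset.prod_congr rfl fun x hx => (if_neg (Finset.ne_of_mem_erase hx)).symm
    _ = ∏ v' : {v : V // v ≠ u}, (if v' = w then 1 else b v'.val) :=
        Finset.prod_erase (f := fun v' => if v' = w then 1 else b v'.val)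
          Finset.univ (if_pos rfl)
    _ = ∏ v' : {v : V // v ≠ u}, (if v'.val = w.val then 1 else b v'.val) := by
        simp only [Subtype.ext_iff]
    _ = ∏ v ∈ Finset.univ.erase u, (if v = w.val then 1 else b v) :=
        prod_subtype_univ u (fun v => if v = w.val then 1 else b v)
    _ = ∏ v ∈ (Finset.univ.erase u).erase w.val,
          (if v = w.val then 1 else b v) :=
        (Finset.prod_erase (f := fun v => if v = w.val then 1 else b v)
          (Finset.univ.erase u) (if_pos rfl)).symm
    _ = ∏ v ∈ (Finset.univ.erase u).erase w.val, b v :=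
        Finset.prod_congr rfl fun x hx => if_neg (Finset.ne_of_mem_erase hx)

lemma erase_erase_comm (s : Finset V) (x y : V) :
    (s.erase x).erase y = (s.erase y).erase x := by
  ext v
  simp only [Finset.mem_erase]
  tauto

end Helpers

section Tree

lemma exists_good_leaf (e : ι → V × V) (hloop : ∀ i, (e i).1 ≠ (e i).2)
    (hinj : Function.Injective fun i => Sym2.mk (e i))
    (hconn : ∀ x y : V, Relation.ReflTransGen
      (fun x y => ∃ i, e i = (x, y) ∨ e i = (y, x)) x y)
    (hcard : Fintype.card V = Fintype.card ι + 1) (hne : Nonempty ι) :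
    ∃ (u p : V) (t : ι) (hut : e t = (u, p) ∨ e t = (p, u)) (hup : u ≠ p)
      (hleaf : ∀ i, (u = (e i).1 ∨ u = (e i).2) → i = t),
      (∀ i, ((subE e u t (hend_of_leaf e u t hleaf)) i).1
          ≠ ((subE e u t (hend_of_leaf e u t hleaf)) i).2) ∧
      (Function.Injective fun i => Sym2.mk ((subE e u t (hend_of_leaf e u t hleaf)) i)) ∧
      (∀ x y : {v : V // v ≠ u}, Relation.ReflTransGen
        (fun x y => ∃ i, (subE e u t (hend_of_leaf e u t hleaf)) i = (x, y)
          ∨ (subE e u t (hend_of_leaf e u t hleaf)) i = (y, x)) x y) ∧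
      Fintype.card {v : V // v ≠ u} = Fintype.card {i : ι // i ≠ t} + 1 ∧
      Fintype.card {i : ι // i ≠ t} + 1 = Fintype.card ι := by
  classical
  -- degree counting to find a leaf
  set deg : V → ℕ := fun v => (Finset.univ.filter (fun i => v = (e i).1 ∨ v = (e i).2)).card
    with hdeg
  have hsum : ∑ v, deg v = 2 * Fintype.card ι := by
    have h1 : ∀ v, deg v = ∑ i, if v = (e i).1 ∨ v = (e i).2 then 1 else 0 := by
      intro v
      simp only [hdeg]
      rw [Finset.card_filter]
    rw [Finset.sum_congr rfl fun v _ => h1 v, Finset.sum_comm]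
    have h2 : ∀ i, (∑ v, if v = (e i).1 ∨ v = (e i).2 then (1:ℕ) else 0) = 2 := by
      intro i
      rw [← Finset.card_filter]
      have h3 : Finset.univ.filter (fun v => v = (e i).1 ∨ v = (e i).2)
          = {(e i).1, (e i).2} := by
        ext v
        simp
      rw [h3, Finset.card_pair (hloop i)]
    rw [Finset.sum_congr rfl fun i _ => h2 i, Finset.sum_const, Finset.card_univ,
      smul_eq_mul, mul_comm]
  have hdeg1 : ∀ v, 1 ≤ deg v := by
    intro v
    have h2le : 2 ≤ Fintype.card V := by
      have := Fintype.card_pos (α := ι)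
      omega
    obtain ⟨w, hw⟩ := Fintype.exists_ne_of_one_lt_card (by omega) v
    rcases (hconn v w).cases_head with h | ⟨c, ⟨i, hi⟩, _⟩
    · exact absurd h.symm hw
    · rw [hdeg]
      refine Finset.card_pos.mpr ⟨i, ?_⟩
      simp only [Finset.mem_filter, Finset.mem_univ, true_and]
      rcases hi with hi | hi <;> rw [hi]
      · exact Or.inl rfl
      · exact Or.inr rfl
  have hex : ∃ x, deg x ≤ 1 := by
    by_contra h
    push_neg at h
    have h4 : 2 * Fintype.card V ≤ ∑ v, deg v := by
      calc 2 * Fintype.card V = ∑ _v : V, 2 := by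
            rw [Finset.sum_const, Finset.card_univ, smul_eq_mul, mul_comm]
        _ ≤ _ := Finset.sum_le_sum fun v _ => h v
    rw [hsum, hcard] at h4
    omega
  obtain ⟨u, hu⟩ := hex
  have hu1 : deg u = 1 := le_antisymm hu (hdeg1 u)
  obtain ⟨t, ht⟩ := Finset.card_eq_one.mp hu1
  have htmem : t ∈ Finset.univ.filter (fun i => u = (e i).1 ∨ u = (e i).2) := by
    rw [show Finset.univ.filter (fun i => u = (e i).1 ∨ u = (e i).2) = {t} from ht]
    exact Finset.mem_singleton_self t
  have hut0 : u = (e t).1 ∨ u = (e t).2 := by simpa using htmem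
  have hleaf : ∀ i, (u = (e i).1 ∨ u = (e i).2) → i = t := by
    intro i hi
    have h5 : i ∈ Finset.univ.filter (fun i => u = (e i).1 ∨ u = (e i).2) := by simpa using hi
    rw [ht] at h5
    simpa using h5
  -- choose the other endpoint
  obtain ⟨p, hut, hup⟩ : ∃ p, (e t = (u, p) ∨ e t = (p, u)) ∧ u ≠ p := by
    rcases hut0 with h | h
    · exact ⟨(e t).2, Or.inl (by rw [h]), fun heq => hloop t (h.symm.trans heq)⟩
    · exact ⟨(e t).1, Or.inr (by rw [h]), fun heq => hloop t (heq.symm.trans h)⟩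
  have hend := hend_of_leaf e u t hleaf
  refine ⟨u, p, t, hut, hup, hleaf, ?_, ?_, ?_, ?_, ?_⟩
  · -- no loops
    intro i hc
    exact hloop i.val (congrArg Subtype.val hc)
  · -- injectivity
    intro i j h
    have h2 : Sym2.mk (e i.val) = Sym2.mk (e j.val) := by
      have h3 : Sym2.mk (subE e u t (hend_of_leaf e u t hleaf) i)
          (subE e u t (hend_of_leaf e u t hleaf) i)
          = Sym2.mk (subE e u t (hend_of_leaf e u t hleaf) j)
          (subE e u t (hend_of_leaf e u t hleaf) i) := congrFun h _
      have h4 : subE e u t (hend_of_leaf e u t hleaf) i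
          = subE e u t (hend_of_leaf e u t hleaf) j := by
        rcases Sym2.eq_iff.mp h3 with ⟨h5, _⟩ | ⟨_, h5⟩ <;> exact h5
      have h6 : e i.val = e j.val := congrArg (fun q => ((q.1 : V), (q.2 : V))) h4
      rw [h6]
    exact Subtype.ext (hinj h2)
  · -- connectivity
    set f : V → {v : V // v ≠ u} := fun v => if h : v = u then ⟨p, Ne.symm hup⟩ else ⟨v, h⟩
      with hf
    have hfu : f u = ⟨p, Ne.symm hup⟩ := dif_pos rfl
    have hfne : ∀ (v : V) (hv : v ≠ u), f v = ⟨v, hv⟩ := fun v hv => dif_neg hv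
    have hstep : ∀ x y : V, (∃ i, e i = (x, y) ∨ e i = (y, x)) →
        Relation.ReflTransGen (fun x y : {v : V // v ≠ u} =>
          ∃ i, subE e u t hend i = (x, y) ∨ subE e u t hend i = (y, x)) (f x) (f y) := by
      rintro x y ⟨i, hi⟩
      by_cases hit : i = t
      · subst hit
        have hkey : f x = f y := by
          rcases hi with hi | hi <;> rcases hut with h2 | h2 <;>
            [skip; skip; skip; skip] <;>
          · injection h2.symm.trans hi with h3 h4
            rw [← h3, ← h4, hfu, hfne p (Ne.symm hup)]
        rw [hkey]
      · have hxy := hend i hit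
        rcases hi with hi | hi
        · obtain ⟨hx1, hy1⟩ : (e i).1 = x ∧ (e i).2 = y := by rw [hi]; exact ⟨rfl, rfl⟩
          have hx : x ≠ u := hx1 ▸ hxy.1
          have hy : y ≠ u := hy1 ▸ hxy.2
          refine Relation.ReflTransGen.single ⟨⟨i, hit⟩, Or.inl ?_⟩
          rw [hfne x hx, hfne y hy]
          exact congrArg₂ Prod.mk (Subtype.ext hx1) (Subtype.ext hy1)
        · obtain ⟨hx1, hy1⟩ : (e i).1 = y ∧ (e i).2 = x := by rw [hi]; exact ⟨rfl, rfl⟩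
          have hx : x ≠ u := hy1 ▸ hxy.2
          have hy : y ≠ u := hx1 ▸ hxy.1
          refine Relation.ReflTransGen.single ⟨⟨i, hit⟩, Or.inr ?_⟩
          rw [hfne x hx, hfne y hy]
          exact congrArg₂ Prod.mk (Subtype.ext hx1) (Subtype.ext hy1)
    have hlift : ∀ x y : V,
        Relation.ReflTransGen (fun x y => ∃ i, e i = (x, y) ∨ e i = (y, x)) x y →
        Relation.ReflTransGen (fun x y : {v : V // v ≠ u} =>
          ∃ i, subE e u t hend i = (x, y) ∨ subE e u t hend i = (y, x)) (f x) (f y) := by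
      intro x y h
      induction h with
      | refl => exact Relation.ReflTransGen.refl
      | tail _ h2 ih => exact ih.trans (hstep _ _ h2)
    intro x y
    have h6 := hlift x.val y.val (hconn x.val y.val)
    rw [hfne x.val x.prop, hfne y.val y.prop] at h6
    exact h6
  · -- cards
    have c1 : Fintype.card {v : V // v ≠ u} = Fintype.card V - 1 := by
      rw [Fintype.card_subtype, Finset.filter_ne', Finset.card_erase_of_mem (Finset.mem_univ u),
        Finset.card_univ]
    have c2 : Fintype.card {i : ι // i ≠ t} = Fintype.card ι - 1 := by
      rw [Fintype.card_subtype, Finset.filter_ne', Finset.card_erase_of_mem (Finset.mem_univ t),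
        Finset.card_univ]
    have := Fintype.card_pos (α := ι)
    omega
  · have c2 : Fintype.card {i : ι // i ≠ t} = Fintype.card ι - 1 := by
      rw [Fintype.card_subtype, Finset.filter_ne', Finset.card_erase_of_mem (Finset.mem_univ t),
        Finset.card_univ]
    have := Fintype.card_pos (α := ι)
    omega

end Tree


section Induction

lemma claimD : ∀ (k : ℕ) (ι V : Type) [Fintype ι] [DecidableEq ι] [Fintype V] [DecidableEq V]
    (e : ι → V × V), (∀ i, (e i).1 ≠ (e i).2) →
    (Function.Injective fun i => Sym2.mk (e i)) →
    (∀ x y : V, Relation.ReflTransGen (fun x y => ∃ i, e i = (x, y) ∨ e i = (y, x)) x y) →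
    Fintype.card V = Fintype.card ι + 1 → Fintype.card ι = k →
    ∀ (a : V → ℝ) (s : V), a s = 0 →
      (Mm e a).det = ∏ v ∈ Finset.univ.erase s, a v := by
  intro k
  induction k with
  | zero =>
    intro ι V _ _ _ _ e hloop hinj hconn hcard hk a s hs
    haveI : IsEmpty ι := Fintype.card_eq_zero_iff.mp hk
    have h1 : (Finset.univ : Finset V).erase s = ∅ := by
      haveI : Subsingleton V :=
        Fintype.card_le_one_iff_subsingleton.mp (by omega)
      ext v
      simp only [Finset.mem_erase, Finset.mem_univ, and_true, Finset.notMem_empty, iff_false]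
      intro h
      exact h (Subsingleton.elim v s)
    rw [Matrix.det_isEmpty, h1, Finset.prod_empty]
  | succ n ih =>
    intro ι V _ _ _ _ e hloop hinj hconn hcard hk a s hs
    haveI hne : Nonempty ι := Fintype.card_pos_iff.mp (by omega)
    obtain ⟨u, p, t, hut, hup, hleaf, hloop', hinj', hconn', hcard', hk'⟩ :=
      exists_good_leaf e hloop hinj hconn hcard hne
    have hk'' : Fintype.card {i : ι // i ≠ t} = n := by omega
    have hstar := lemStar e u p t hloop hut hup hleaf a
    set e' := subE e u t (hend_of_leaf e u t hleaf) with he'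
    by_cases hsu : s = u
    · subst hsu
      have h2 := ih _ _ e' hloop' hinj' hconn' hcard' hk''
        (fun v => Function.update a p 0 v.val) ⟨p, Ne.symm hup⟩ (by simp)
      rw [hstar, hs, zero_mul, zero_add, h2,
        prod_subtype_erase s ⟨p, Ne.symm hup⟩ (Function.update a p 0)]
      have h3 : ∏ v ∈ (Finset.univ.erase s).erase p, Function.update a p 0 v
          = ∏ v ∈ (Finset.univ.erase s).erase p, a v :=
        Finset.prod_congr rfl fun v hv =>
          Function.update_of_ne (Finset.ne_of_mem_erase hv) 0 a
      rw [h3, Finset.mul_prod_erase _ a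
        (Finset.mem_erase.mpr ⟨Ne.symm hup, Finset.mem_univ p⟩)]
    · have h2 := ih _ _ e' hloop' hinj' hconn' hcard' hk''
        (fun v => a v.val) ⟨s, hsu⟩ hs
      have hterm2 : a p * (Mm e' (fun v => Function.update a p 0 v.val)).det = 0 := by
        by_cases hps : p = s
        · rw [hps, hs, zero_mul]
        · have h4 := ih _ _ e' hloop' hinj' hconn' hcard' hk''
            (fun v => Function.update a p 0 v.val) ⟨s, hsu⟩
            (by show Function.update a p 0 s = 0
                rw [Function.update_of_ne (fun hc => hps hc.symm) 0 a]
                exact hs)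
          rw [h4, prod_subtype_erase u ⟨s, hsu⟩ (Function.update a p 0)]
          rw [Finset.prod_eq_zero (i := p) (Finset.mem_erase.mpr ⟨hps,
            Finset.mem_erase.mpr ⟨Ne.symm hup, Finset.mem_univ p⟩⟩)
            (Function.update_self p 0 a), mul_zero]
      rw [hstar, hterm2, add_zero, h2, prod_subtype_erase u ⟨s, hsu⟩ a, erase_erase_comm]
      exact Finset.mul_prod_erase _ a (Finset.mem_erase.mpr ⟨Ne.symm hsu, Finset.mem_univ u⟩)

lemma claimL : ∀ (k : ℕ) (ι V : Type) [Fintype ι] [DecidableEq ι] [Fintype V] [DecidableEq V]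
    (e : ι → V × V), (∀ i, (e i).1 ≠ (e i).2) →
    (Function.Injective fun i => Sym2.mk (e i)) →
    (∀ x y : V, Relation.ReflTransGen (fun x y => ∃ i, e i = (x, y) ∨ e i = (y, x)) x y) →
    Fintype.card V = Fintype.card ι + 1 → Fintype.card ι = k →
    ∀ a : V → ℝ, (Mm e a).det = ∑ w, ∏ v ∈ Finset.univ.erase w, a v := by
  intro k
  induction k with
  | zero =>
    intro ι V _ _ _ _ e hloop hinj hconn hcard hk a
    haveI : IsEmpty ι := Fintype.card_eq_zero_iff.mp hk
    obtain ⟨w0, hw0⟩ := Fintype.card_eq_one_iff.mp (show Fintype.card V = 1 by omega)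
    have huniv : (Finset.univ : Finset V) = {w0} := by
      ext v
      simp [hw0 v]
    rw [Matrix.det_isEmpty, huniv, Finset.sum_singleton,
      show ({w0} : Finset V).erase w0 = ∅ by simp, Finset.prod_empty]
  | succ n ih =>
    intro ι V _ _ _ _ e hloop hinj hconn hcard hk a
    haveI hne : Nonempty ι := Fintype.card_pos_iff.mp (by omega)
    obtain ⟨u, p, t, hut, hup, hleaf, hloop', hinj', hconn', hcard', hk'⟩ :=
      exists_good_leaf e hloop hinj hconn hcard hne
    have hk'' : Fintype.card {i : ι // i ≠ t} = n := by omega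
    have hstar := lemStar e u p t hloop hut hup hleaf a
    set e' := subE e u t (hend_of_leaf e u t hleaf) with he'
    have h2 := claimD n _ _ e' hloop' hinj' hconn' hcard' hk''
      (fun v => Function.update a p 0 v.val) ⟨p, Ne.symm hup⟩ (by simp)
    have hterm2 : a p * (Mm e' (fun v => Function.update a p 0 v.val)).det
        = ∏ v ∈ Finset.univ.erase u, a v := by
      rw [h2, prod_subtype_erase u ⟨p, Ne.symm hup⟩ (Function.update a p 0)]
      have h3 : ∏ v ∈ (Finset.univ.erase u).erase p, Function.update a p 0 v
          = ∏ v ∈ (Finset.univ.erase u).erase p, a v :=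
        Finset.prod_congr rfl fun v hv =>
          Function.update_of_ne (Finset.ne_of_mem_erase hv) 0 a
      rw [h3, Finset.mul_prod_erase _ a
        (Finset.mem_erase.mpr ⟨Ne.symm hup, Finset.mem_univ p⟩)]
    have h4 := ih _ _ e' hloop' hinj' hconn' hcard' hk'' (fun v => a v.val)
    have hterm1 : a u * (Mm e' (fun v => a v.val)).det
        = ∑ w ∈ Finset.univ.erase u, ∏ v ∈ Finset.univ.erase w, a v := by
      rw [h4, Finset.mul_sum,
        ← sum_subtype_univ u (fun w => ∏ v ∈ Finset.univ.erase w, a v)]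
      refine Finset.sum_congr rfl fun w _ => ?_
      rw [prod_subtype_erase u w a, erase_erase_comm]
      exact Finset.mul_prod_erase _ a
        (Finset.mem_erase.mpr ⟨Ne.symm w.prop, Finset.mem_univ u⟩)
    rw [hstar, hterm1, hterm2, add_comm]
    exact Finset.add_sum_erase Finset.univ
      (fun w => ∏ v ∈ Finset.univ.erase w, a v) (Finset.mem_univ u)

end Induction


lemma Nm_eq_one {e : ι → V × V} {j : ι} {v : V} (h : v = (e j).1 ∨ v = (e j).2) :
    Nm e j v = 1 := if_pos h

lemma Nm_eq_zero {e : ι → V × V} {j : ι} {v : V} (h : ¬(v = (e j).1 ∨ v = (e j).2)) :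
    Nm e j v = 0 := if_neg h

end DetTreeAux

/-- **Determinant lemma for tree transfer-impedance-like matrices.**
Let `a 1, …, a (k+1)` be positive reals and `e 1, …, e k` the edges of a tree on
vertex set `Fin (k+1)` (no self-loops, pairwise distinct as unordered pairs,
connecting the vertex set).  If `M` is the `k × k` matrix with
`M i i = a r + a s` when `e i` joins `r` and `s`, `M i j = a r` when the distinct
edges `e i, e j` meet at the vertex `r`, and `M i j = 0` when they share no
vertex, then `det M = (∏ a v) * (∑ (a v)⁻¹)`. -/
theorem det_tree_matrix (k : ℕ) (a : Fin (k + 1) → ℝ) (ha : ∀ v, 0 < a v)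
    (e : Fin k → Fin (k + 1) × Fin (k + 1))
    (hloop : ∀ i, (e i).1 ≠ (e i).2)
    (hinj : Function.Injective fun i => Sym2.mk (e i))
    (hconn : ∀ u v : Fin (k + 1),
      Relation.ReflTransGen (fun x y => ∃ i, e i = (x, y) ∨ e i = (y, x)) u v)
    (M : Matrix (Fin k) (Fin k) ℝ)
    (hdiag : ∀ i, M i i = a (e i).1 + a (e i).2)
    (hmeet : ∀ i j, i ≠ j → ∀ v : Fin (k + 1),
      (v = (e i).1 ∨ v = (e i).2) → (v = (e j).1 ∨ v = (e j).2) → M i j = a v)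
    (hdisj : ∀ i j, i ≠ j →
      (∀ v : Fin (k + 1),
        ¬((v = (e i).1 ∨ v = (e i).2) ∧ (v = (e j).1 ∨ v = (e j).2))) → M i j = 0) :
    M.det = (∏ v, a v) * (∑ v, (a v)⁻¹) := by
  classical
  have hM : M = DetTreeAux.Mm e a := by
    ext i j
    rw [DetTreeAux.Mm_row e hloop a i j]
    by_cases hij : i = j
    · subst hij
      rw [hdiag i, DetTreeAux.Nm_eq_one (Or.inl rfl), DetTreeAux.Nm_eq_one (Or.inr rfl)]
      ring
    · by_cases h1 : (e i).1 = (e j).1 ∨ (e i).1 = (e j).2 <;>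
        by_cases h2 : (e i).2 = (e j).1 ∨ (e i).2 = (e j).2
      · exfalso
        apply hij
        apply hinj
        show Sym2.mk (e i) = Sym2.mk (e j)
        have hxy := hloop i
        rcases h1 with h1 | h1 <;> rcases h2 with h2 | h2
        · exact absurd (h1.trans h2.symm) hxy
        · have hei : e i = e j := by
            rw [← Prod.mk.eta (p := e i), ← Prod.mk.eta (p := e j), h1, h2]
          rw [hei]
        · have hei : e i = ((e j).2, (e j).1) := by
            rw [← Prod.mk.eta (p := e i), h1, h2]
          exfalso
          have hN : ∀ v, DetTreeAux.Nm e i v = DetTreeAux.Nm e j v := by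
            intro v
            unfold DetTreeAux.Nm
            simp only [Matrix.of_apply, hei]
            by_cases h3 : v = (e j).1 <;> by_cases h4 : v = (e j).2 <;> simp [h3, h4]
          have hrow : DetTreeAux.Mm e (fun _ => (1:ℝ)) i = DetTreeAux.Mm e (fun _ => (1:ℝ)) j := by
            funext l
            unfold DetTreeAux.Mm
            simp only [Matrix.of_apply, hN]
          have h0 := Matrix.det_zero_of_row_eq hij hrow
          rw [DetTreeAux.claimL k (Fin k) (Fin (k + 1)) e hloop hinj hconn (by simp) (by simp)
            _] at h0
          simp at h0
          exact absurd h0 (by positivity)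
        · exact absurd (h1.trans h2.symm) hxy
      · rw [hmeet i j hij (e i).1 (Or.inl rfl) h1, DetTreeAux.Nm_eq_one h1,
          DetTreeAux.Nm_eq_zero h2]
        ring
      · rw [hmeet i j hij (e i).2 (Or.inr rfl) h2, DetTreeAux.Nm_eq_zero h1,
          DetTreeAux.Nm_eq_one h2]
        ring
      · rw [hdisj i j hij ?_, DetTreeAux.Nm_eq_zero h1, DetTreeAux.Nm_eq_zero h2]
        · ring
        · intro v hv
          rcases hv with ⟨hva, hvb⟩
          rcases hva with h | h
          · rw [h] at hvb
            exact h1 hvb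
          · rw [h] at hvb
            exact h2 hvb
  rw [hM, DetTreeAux.claimL k (Fin k) (Fin (k + 1)) e hloop hinj hconn (by simp) (by simp) a,
    Finset.mul_sum]
  refine Finset.sum_congr rfl fun w _ => ?_
  have hw : a w ≠ 0 := ne_of_gt (ha w)
  rw [← Finset.mul_prod_erase Finset.univ a (Finset.mem_univ w), mul_comm (a w),
    mul_assoc, mul_inv_cancel₀ hw, mul_one]
end

section
/- Let $U$ be the family tree of a Galton–Watson branching process with Poisson(1) offspring distribution, rooted at its initial vertex, and let $t$ be any finite rooted tree. Then the expected number of tree-maps from $t$ into $U$ equals $1$, i.e. $\mathbb{E}\, N(U;t) = 1$. -/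
/-- Finite rooted (ordered) trees: a tree is a root together with a list of subtrees. -/
inductive RTree : Type
  | node : List RTree → RTree

namespace RTree

/-- The list of subtrees hanging below the root. -/
def children : RTree → List RTree
  | node ts => ts

/-- `ncount u t` is the number of tree-maps from `t` into `u`: injective maps of
vertices sending root to root and children of a vertex to distinct children of its
image.  Equivalently, one chooses an embedding of the root-children of `t` into the
root-children of `u` and, independently, tree-maps of the corresponding subtrees. -/
noncomputable def ncount : RTree → RTree → ℕ
  | node us, node ts =>
    ∑ f : Fin ts.length ↪ Fin us.length,
      ∏ i : Fin ts.length,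
        ncount (us.get (f i)) (ts.get i)
  termination_by u t => sizeOf t
  decreasing_by
    simp only [node.sizeOf_spec]
    exact Nat.lt_add_left 1 (List.sizeOf_lt_of_mem (List.get_mem _ _))

/-- The probability that a Galton–Watson branching process with Poisson(1) offspring
distribution produces exactly the (ordered) tree `t`: each vertex independently has a
Poisson(1) number of children, so a vertex with `c` children contributes `e⁻¹ / c!`. -/
noncomputable def gwProb : RTree → ℝ
  | node ts =>
      (Real.exp (-1) / (Nat.factorial ts.length)) *
        (ts.attach.map fun x => gwProb x.1).prod
  termination_by t => sizeOf t
  decreasing_by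
    have h1 : sizeOf x.1 < sizeOf ts := List.sizeOf_lt_of_mem x.2
    simp only [node.sizeOf_spec]
    omega

/-! ### Auxiliary machinery -/

open ENNReal

lemma gwProb_node (ts : List RTree) :
    gwProb (node ts) = (Real.exp (-1) / (Nat.factorial ts.length)) *
      ∏ i : Fin ts.length, gwProb (ts.get i) := by
  rw [gwProb]
  congr 1
  rw [List.attach_map_val (l := ts) (f := fun x => gwProb x), ← List.ofFn_getElem_eq_map ts gwProb,
    List.prod_ofFn]
  rfl

lemma gwProb_nonneg : ∀ u : RTree, 0 ≤ gwProb u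
  | node ts => by
    rw [gwProb_node]
    exact mul_nonneg (by positivity) (Finset.prod_nonneg fun i _ => gwProb_nonneg (ts.get i))
  termination_by u => sizeOf u
  decreasing_by
    simp only [node.sizeOf_spec]
    exact Nat.lt_add_left 1 (List.sizeOf_lt_of_mem (List.get_mem _ _))

/-- `gwProb` as a function into `ℝ≥0∞`. -/
noncomputable def gw (u : RTree) : ℝ≥0∞ := ENNReal.ofReal (gwProb u)

lemma gw_node (ts : List RTree) :
    gw (node ts) = ENNReal.ofReal (Real.exp (-1) / (Nat.factorial ts.length)) *
      ∏ i : Fin ts.length, gw (ts.get i) := by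
  rw [gw, gwProb_node, ENNReal.ofReal_mul (by positivity),
    ENNReal.ofReal_prod_of_nonneg (fun i _ => gwProb_nonneg _)]
  rfl

/-- Equivalence between `RTree` and lists of trees. -/
def childEquiv : RTree ≃ List RTree where
  toFun u := match u with | node ts => ts
  invFun := node
  left_inv u := by cases u; rfl
  right_inv l := rfl

def sigmaEquiv : RTree ≃ Σ n, Fin n → RTree :=
  childEquiv.trans List.equivSigmaTuple

lemma tsum_eq_tsum_node (F : RTree → ℝ≥0∞) :
    ∑' u, F u = ∑' (n : ℕ), ∑' (g : Fin n → RTree), F (node (List.ofFn g)) := by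
  rw [← sigmaEquiv.symm.tsum_eq F, ENNReal.tsum_sigma']
  rfl

lemma ncount_node_ofFn {n : ℕ} (g : Fin n → RTree) (ts : List RTree) :
    ncount (node (List.ofFn g)) (node ts)
      = ∑ f : Fin ts.length ↪ Fin n, ∏ i, ncount (g (f i)) (ts.get i) := by
  rw [ncount]
  have hl : (List.ofFn g).length = n := List.length_ofFn (f := g)
  refine Fintype.sum_equiv
    (Equiv.embeddingCongr (Equiv.refl (Fin ts.length)) (finCongr hl)) _ _ ?_
  intro f
  refine Finset.prod_congr rfl fun i _ => ?_
  congr 1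
  rw [List.get_ofFn]
  rfl

lemma gw_node_ofFn {n : ℕ} (g : Fin n → RTree) :
    gw (node (List.ofFn g)) = ENNReal.ofReal (Real.exp (-1) / (Nat.factorial n)) *
      ∏ j, gw (g j) := by
  rw [gw_node]
  have hl : (List.ofFn g).length = n := List.length_ofFn (f := g)
  congr 1
  · rw [hl]
  · refine Fintype.prod_equiv (finCongr hl) _ _ fun i => ?_
    congr 1
    rw [List.get_ofFn]
    rfl

/-- `∑' g : Fin n → α, ∏ j, F j (g j) = ∏ j, ∑' u, F j u` in `ℝ≥0∞`. -/
lemma tsum_pi_prod {α : Type*} : ∀ (n : ℕ) (F : Fin n → α → ℝ≥0∞),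
    ∑' g : Fin n → α, ∏ j, F j (g j) = ∏ j, ∑' u, F j u := by
  intro n
  induction n with
  | zero =>
    intro F
    simp only [Finset.univ_eq_empty, Finset.prod_empty]
    rw [tsum_eq_single (fun i => i.elim0) (fun b hb => absurd (Subsingleton.elim b _) hb)]
  | succ n ih =>
    intro F
    rw [← (Fin.consEquiv (fun _ : Fin (n + 1) => α)).tsum_eq]
    rw [ENNReal.tsum_prod']
    have h : ∀ (a : α) (g : Fin n → α),
        (∏ j, F j ((Fin.consEquiv (fun _ : Fin (n + 1) => α)) (a, g) j))
          = F 0 a * ∏ j, F j.succ (g j) := by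
      intro a g
      rw [Fin.prod_univ_succ]
      simp [Fin.consEquiv]
    simp_rw [h]
    rw [Fin.prod_univ_succ]
    simp_rw [ENNReal.tsum_mul_left, ENNReal.tsum_mul_right]
    rw [ih]

/-- The exponential series in `ℝ≥0∞`. -/
lemma tsum_exp_series (r : ℝ) (hr : 0 ≤ r) :
    ∑' n : ℕ, ENNReal.ofReal (Real.exp (-1) / (Nat.factorial n)) * (ENNReal.ofReal r) ^ n
      = ENNReal.ofReal (Real.exp (r - 1)) := by
  have h1 : ∀ n : ℕ, ENNReal.ofReal (Real.exp (-1) / (Nat.factorial n)) * (ENNReal.ofReal r) ^ n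
      = ENNReal.ofReal (Real.exp (-1) * (r ^ n / (Nat.factorial n))) := by
    intro n
    rw [← ENNReal.ofReal_pow hr, ← ENNReal.ofReal_mul (by positivity)]
    ring_nf
  simp_rw [h1]
  rw [← ENNReal.ofReal_tsum_of_nonneg (fun n => by positivity)
    ((Real.summable_pow_div_factorial r).mul_left _)]
  congr 1
  rw [tsum_mul_left]
  have h2 : ∑' n : ℕ, r ^ n / (Nat.factorial n) = Real.exp r := by
    rw [Real.exp_eq_exp_ℝ, NormedSpace.exp_eq_tsum_div]
  rw [h2, ← Real.exp_add]
  ring_nf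

/-! ### Total mass of the Galton–Watson measure -/

/-- Height-truncated Galton–Watson weights. -/
noncomputable def phi : ℕ → RTree → ℝ≥0∞
  | 0, _ => 0
  | h + 1, node ts =>
      ENNReal.ofReal (Real.exp (-1) / (Nat.factorial ts.length)) *
        ∏ i : Fin ts.length, phi h (ts.get i)

lemma phi_node_ofFn {n : ℕ} (h : ℕ) (g : Fin n → RTree) :
    phi (h + 1) (node (List.ofFn g)) = ENNReal.ofReal (Real.exp (-1) / (Nat.factorial n)) *
      ∏ j, phi h (g j) := by
  rw [phi]
  have hl : (List.ofFn g).length = n := List.length_ofFn (f := g)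
  congr 1
  · rw [hl]
  · refine Fintype.prod_equiv (finCongr hl) _ _ fun i => ?_
    congr 1
    rw [List.get_ofFn]
    rfl

lemma phi_le_succ : ∀ (h : ℕ) (u : RTree), phi h u ≤ phi (h + 1) u := by
  intro h
  induction h with
  | zero => intro u; rw [phi]; exact zero_le
  | succ h ih =>
    intro u
    cases u with
    | node ts =>
      rw [phi, phi]
      exact mul_le_mul' le_rfl (Finset.prod_le_prod' fun i _ => ih (ts.get i))

lemma phi_mono (u : RTree) : Monotone fun h => phi h u :=
  monotone_nat_of_le_succ fun h => phi_le_succ h u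

lemma sizeOf_pos (u : RTree) : 0 < sizeOf u := by
  cases u with
  | node ts => simp only [node.sizeOf_spec]; omega

lemma phi_eq_gw : ∀ (h : ℕ) (u : RTree), sizeOf u ≤ h → phi h u = gw u := by
  intro h
  induction h with
  | zero => intro u hu; exact absurd hu (by simpa using (sizeOf_pos u).ne')
  | succ h ih =>
    intro u hu
    cases u with
    | node ts =>
      rw [phi, gw_node]
      congr 1
      refine Finset.prod_congr rfl fun i _ => ih _ ?_
      have h1 : sizeOf (ts.get i) < sizeOf (node ts) := by
        simp only [node.sizeOf_spec]
        exact Nat.lt_add_left 1 (List.sizeOf_lt_of_mem (List.get_mem _ _))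
      omega

lemma phi_le_gw (h : ℕ) (u : RTree) : phi h u ≤ gw u := by
  calc phi h u ≤ phi (max h (sizeOf u)) u := phi_mono u (le_max_left _ _)
  _ = gw u := phi_eq_gw _ _ (le_max_right _ _)

lemma iSup_phi (u : RTree) : ⨆ h, phi h u = gw u :=
  le_antisymm (iSup_le fun h => phi_le_gw h u)
    (le_iSup_of_le (sizeOf u) (phi_eq_gw _ _ le_rfl).ge)

lemma tsum_gw_eq_iSup : ∑' u, gw u = ⨆ h, ∑' u, phi h u := by
  refine le_antisymm ?_ (iSup_le fun h => ENNReal.tsum_le_tsum fun u => phi_le_gw h u)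
  conv_lhs => rw [ENNReal.tsum_eq_iSup_sum]
  refine iSup_le fun s => ?_
  have : ∑ u ∈ s, gw u = ⨆ h, ∑ u ∈ s, phi h u := by
    simp_rw [← iSup_phi]
    exact ENNReal.finsetSum_iSup_of_monotone fun u => phi_mono u
  rw [this]
  exact iSup_mono fun h => ENNReal.sum_le_tsum s

/-- The truncated total masses, as a real sequence. -/
noncomputable def gwr : ℕ → ℝ
  | 0 => 0
  | h + 1 => Real.exp (gwr h - 1)

lemma gwr_nonneg (h : ℕ) : 0 ≤ gwr h := by
  cases h with
  | zero => exact le_rfl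
  | succ h => exact (Real.exp_pos _).le

lemma gwr_le_one (h : ℕ) : gwr h ≤ 1 := by
  cases h with
  | zero => exact zero_le_one
  | succ h =>
    rw [gwr]
    have := gwr_le_one h
    calc Real.exp (gwr h - 1) ≤ Real.exp 0 := Real.exp_le_exp.2 (by linarith)
    _ = 1 := Real.exp_zero

lemma gwr_mono : Monotone gwr := by
  refine monotone_nat_of_le_succ ?_
  intro h
  induction h with
  | zero => exact gwr_nonneg 1
  | succ h ih => exact Real.exp_le_exp.2 (by linarith)

lemma tsum_phi (h : ℕ) : ∑' u, phi h u = ENNReal.ofReal (gwr h) := by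
  induction h with
  | zero => simp [phi, gwr]
  | succ h ih =>
    rw [tsum_eq_tsum_node (phi (h + 1))]
    have step : ∀ n : ℕ, ∑' g : Fin n → RTree, phi (h + 1) (node (List.ofFn g))
        = ENNReal.ofReal (Real.exp (-1) / (Nat.factorial n)) * (ENNReal.ofReal (gwr h)) ^ n := by
      intro n
      simp_rw [phi_node_ofFn h]
      rw [ENNReal.tsum_mul_left, tsum_pi_prod n (fun _ => phi h)]
      simp [ih, Finset.prod_const]
    simp_rw [step]
    rw [tsum_exp_series _ (gwr_nonneg h), gwr]

lemma gwr_tendsto : Filter.Tendsto gwr Filter.atTop (nhds 1) := by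
  have hbdd : BddAbove (Set.range gwr) := ⟨1, by rintro x ⟨h, rfl⟩; exact gwr_le_one h⟩
  have htend := tendsto_atTop_ciSup gwr_mono hbdd
  set L := ⨆ h, gwr h with hL
  have hLle : L ≤ 1 := ciSup_le gwr_le_one
  have h1 : Filter.Tendsto (fun h => gwr (h + 1)) Filter.atTop (nhds L) :=
    htend.comp (Filter.tendsto_add_atTop_nat 1)
  have h2 : Filter.Tendsto (fun h => Real.exp (gwr h - 1)) Filter.atTop
      (nhds (Real.exp (L - 1))) :=
    (Real.continuous_exp.continuousAt.tendsto.comp ((htend.sub_const 1)))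
  have h1' : Filter.Tendsto (fun h => Real.exp (gwr h - 1)) Filter.atTop (nhds L) := h1
  have hfix : L = Real.exp (L - 1) := tendsto_nhds_unique h1' h2
  have hL1 : L = 1 := by
    by_contra hne
    have : L - 1 ≠ 0 := fun hc => hne (by linarith)
    have := Real.add_one_lt_exp this
    rw [← hfix] at this
    linarith
  rwa [hL1] at htend

lemma tsum_gw : ∑' u, gw u = 1 := by
  rw [tsum_gw_eq_iSup]
  simp_rw [tsum_phi]
  have hmono : Monotone fun h => ENNReal.ofReal (gwr h) :=
    fun a b hab => ENNReal.ofReal_le_ofReal (gwr_mono hab)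
  have htend : Filter.Tendsto (fun h => ENNReal.ofReal (gwr h)) Filter.atTop
      (nhds (ENNReal.ofReal 1)) :=
    (ENNReal.continuous_ofReal.continuousAt.tendsto.comp gwr_tendsto)
  rw [iSup_eq_of_tendsto hmono htend, ENNReal.ofReal_one]

/-! ### The key computation -/

lemma factor_eq_one {n : ℕ} (ts : List RTree)
    (IH : ∀ i : Fin ts.length, ∑' u, gw u * (ncount u (ts.get i) : ℝ≥0∞) = 1)
    (f : Fin ts.length ↪ Fin n) (j : Fin n) :
    ∑' u, gw u * ∏ i ∈ Finset.univ.filter (fun i => f i = j),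
      (ncount u (ts.get i) : ℝ≥0∞) = 1 := by
  by_cases hj : ∃ i, f i = j
  · obtain ⟨i0, hi0⟩ := hj
    have hfil : Finset.univ.filter (fun i => f i = j) = {i0} := by
      ext i
      simp only [Finset.mem_filter, Finset.mem_univ, true_and, Finset.mem_singleton]
      exact ⟨fun h => f.injective (h.trans hi0.symm), fun h => h ▸ hi0⟩
    rw [hfil]
    simpa using IH i0
  · have hfil : Finset.univ.filter (fun i => f i = j) = ∅ := by
      ext i
      simp only [Finset.mem_filter, Finset.mem_univ, true_and, Finset.notMem_empty,
        iff_false]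
      exact fun h => hj ⟨i, h⟩
    rw [hfil]
    simpa using tsum_gw

lemma final_sum (k : ℕ) :
    ∑' n : ℕ, ENNReal.ofReal (Real.exp (-1) / (Nat.factorial n)) *
      (n.descFactorial k : ℝ≥0∞) = 1 := by
  set a : ℕ → ℝ := fun n => Real.exp (-1) * ((n.descFactorial k : ℝ) / (Nat.factorial n))
    with ha
  have hshift : ∀ m : ℕ, a (m + k) = Real.exp (-1) * ((1:ℝ) ^ m / (Nat.factorial m)) := by
    intro m
    have hd : ((Nat.factorial m : ℝ)) * (((m + k).descFactorial k : ℝ))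
        = ((Nat.factorial (m + k) : ℝ)) := by
      have h := Nat.factorial_mul_descFactorial (Nat.le_add_left k m)
      rw [Nat.add_sub_cancel] at h
      exact_mod_cast h
    have hm : (0:ℝ) < Nat.factorial m := by positivity
    have hmk : (0:ℝ) < Nat.factorial (m + k) := by positivity
    rw [ha]
    simp only
    rw [one_pow]
    congr 1
    rw [div_eq_div_iff hmk.ne' hm.ne']
    linarith [hd]
  have hsummable : Summable a := by
    rw [← summable_nat_add_iff k]
    exact ((Real.summable_pow_div_factorial 1).mul_left (Real.exp (-1))).congr
      fun m => (hshift m).symm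
  have hzero : ∀ n ∈ Finset.range k, a n = 0 := by
    intro n hn
    rw [ha]
    simp only
    rw [Nat.descFactorial_eq_zero_iff_lt.2 (Finset.mem_range.1 hn)]
    simp
  have hsum : ∑' n, a n = 1 := by
    rw [← Summable.sum_add_tsum_nat_add k hsummable, Finset.sum_eq_zero hzero, zero_add]
    rw [tsum_congr hshift, tsum_mul_left]
    have hexp : ∑' m : ℕ, (1:ℝ) ^ m / (Nat.factorial m) = Real.exp 1 := by
      rw [Real.exp_eq_exp_ℝ, NormedSpace.exp_eq_tsum_div]
    rw [hexp, ← Real.exp_add]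
    simp
  calc ∑' n : ℕ, ENNReal.ofReal (Real.exp (-1) / (Nat.factorial n)) *
        (n.descFactorial k : ℝ≥0∞)
      = ∑' n : ℕ, ENNReal.ofReal (a n) := by
        refine tsum_congr fun n => ?_
        rw [ha]
        simp only
        rw [← ENNReal.ofReal_natCast (n.descFactorial k),
          ← ENNReal.ofReal_mul (by positivity)]
        congr 1
        ring
    _ = ENNReal.ofReal (∑' n, a n) :=
        (ENNReal.ofReal_tsum_of_nonneg (fun n => by positivity) hsummable).symm
    _ = 1 := by rw [hsum, ENNReal.ofReal_one]

lemma key_node (ts : List RTree)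
    (IH : ∀ i : Fin ts.length, ∑' u, gw u * (ncount u (ts.get i) : ℝ≥0∞) = 1) :
    ∑' u, gw u * (ncount u (node ts) : ℝ≥0∞) = 1 := by
  rw [tsum_eq_tsum_node]
  have step : ∀ n : ℕ,
      ∑' g : Fin n → RTree,
        gw (node (List.ofFn g)) * (ncount (node (List.ofFn g)) (node ts) : ℝ≥0∞)
      = ENNReal.ofReal (Real.exp (-1) / (Nat.factorial n)) *
          (n.descFactorial ts.length : ℝ≥0∞) := by
    intro n
    have h1 : ∀ g : Fin n → RTree,
        gw (node (List.ofFn g)) * (ncount (node (List.ofFn g)) (node ts) : ℝ≥0∞)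
        = ENNReal.ofReal (Real.exp (-1) / (Nat.factorial n)) *
            ∑ f : Fin ts.length ↪ Fin n, ∏ j : Fin n,
              (gw (g j) * ∏ i ∈ Finset.univ.filter (fun i => f i = j),
                (ncount (g j) (ts.get i) : ℝ≥0∞)) := by
      intro g
      rw [gw_node_ofFn, ncount_node_ofFn]
      push_cast
      rw [mul_assoc]
      congr 1
      rw [Finset.mul_sum]
      refine Finset.sum_congr rfl fun f _ => ?_
      rw [Finset.prod_mul_distrib]
      congr 1
      have hfw := Finset.prod_fiberwise_of_maps_to
        (s := (Finset.univ : Finset (Fin ts.length))) (t := (Finset.univ : Finset (Fin n)))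
        (g := fun i => f i) (fun i _ => Finset.mem_univ (f i))
        (fun i => (ncount (g (f i)) (ts.get i) : ℝ≥0∞))
      rw [← hfw]
      refine Finset.prod_congr rfl fun j _ => ?_
      refine Finset.prod_congr rfl fun i hi => ?_
      rw [(Finset.mem_filter.1 hi).2]
    simp_rw [h1]
    rw [ENNReal.tsum_mul_left]
    congr 1
    rw [Summable.tsum_finsetSum fun _ _ => ENNReal.summable]
    have h2 : ∀ f : Fin ts.length ↪ Fin n,
        ∑' g : Fin n → RTree, ∏ j : Fin n,
          (gw (g j) * ∏ i ∈ Finset.univ.filter (fun i => f i = j),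
            (ncount (g j) (ts.get i) : ℝ≥0∞)) = 1 := by
      intro f
      rw [tsum_pi_prod n (fun j u => gw u * ∏ i ∈ Finset.univ.filter (fun i => f i = j),
        (ncount u (ts.get i) : ℝ≥0∞))]
      exact Finset.prod_eq_one fun j _ => factor_eq_one ts IH f j
    simp_rw [h2]
    simp [Fintype.card_embedding_eq, mul_comm]
  simp_rw [step]
  exact final_sum ts.length

lemma key : ∀ t : RTree, ∑' u, gw u * (ncount u t : ℝ≥0∞) = 1
  | node ts => key_node ts (fun i => key (ts.get i))
  termination_by t => sizeOf t
  decreasing_by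
    simp only [node.sizeOf_spec]
    exact Nat.lt_add_left 1 (List.sizeOf_lt_of_mem (List.get_mem _ _))

end RTree

/-- **Expected number of tree-maps into a Poisson(1) Galton–Watson tree.**
For every finite rooted tree `t`, the expected number of tree-maps from `t` into the
family tree `U` of a Poisson(1) Galton–Watson branching process equals `1`. -/
theorem expected_treemaps_gw_poisson_one (t : RTree) :
    ∑' u : RTree, RTree.gwProb u * (RTree.ncount u t : ℝ) = 1 := by
  have hkey := RTree.key t
  have h1 : ∀ u, RTree.gw u * (RTree.ncount u t : ENNReal)
      = ENNReal.ofReal (RTree.gwProb u * (RTree.ncount u t : ℝ)) := by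
    intro u
    rw [ENNReal.ofReal_mul (RTree.gwProb_nonneg u), RTree.gw, ENNReal.ofReal_natCast]
  have h2 := congrArg ENNReal.toReal hkey
  rw [ENNReal.tsum_toReal_eq (fun u => by rw [h1]; exact ENNReal.ofReal_ne_top)] at h2
  simp only [ENNReal.toReal_one] at h2
  rw [← h2]
  refine tsum_congr fun u => ?_
  rw [h1, ENNReal.toReal_ofReal (mul_nonneg (RTree.gwProb_nonneg u) (Nat.cast_nonneg _))]
end

section
/- With $Q(\alpha) = D^{-1}\sum_x e^{2\pi i \alpha\cdot x}R^x$ the Fourier-transformed adjacency matrix of a connected, $D$-regular, aperiodic periodic graph $G$ with at least one self-edge at every vertex class reachable as described, there is a constant $K = K(G) > 0$ such that every eigenvalue $\lambda$ of $Q(\alpha)$ satisfies $|\lambda| \le 1 - K|\alpha|^2$, where $|\alpha| = \max_j |\alpha_j|$ for $\alpha \in T^d$ identified with $(-1/2,1/2]^d$. -/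
open Complex Finset

namespace EigQAux

/-- The phase factor, written exactly as in the theorem statement. -/
noncomputable def phase {d : ℕ} (α : Fin d → ℝ) (x : Fin d → ℤ) : ℂ :=
  Complex.exp (2 * Real.pi * Complex.I * ((∑ j, α j * (x j : ℝ) : ℝ) : ℂ))

lemma normSq_phase {d : ℕ} (α : Fin d → ℝ) (x : Fin d → ℤ) :
    Complex.normSq (phase α x) = 1 := by
  have : phase α x
      = Complex.exp ((((2 * Real.pi * ∑ j, α j * (x j : ℝ)) : ℝ) : ℂ) * Complex.I) := by
    unfold phase; push_cast; ring_nf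
  rw [this, ← Complex.sq_norm, Complex.norm_exp_ofReal_mul_I]
  norm_num

lemma abs_phase {d : ℕ} (α : Fin d → ℝ) (x : Fin d → ℤ) :
    ‖phase α x‖ = 1 := by
  have h := normSq_phase α x
  have h2 : ‖phase α x‖ ^ 2 = 1 := by rw [Complex.sq_norm, h]
  nlinarith [norm_nonneg (phase α x)]

lemma phase_zero {d : ℕ} (α : Fin d → ℝ) : phase α 0 = 1 := by
  simp [phase]

lemma conj_phase {d : ℕ} (α : Fin d → ℝ) (x : Fin d → ℤ) :
    (starRingEnd ℂ) (phase α x) = phase α (-x) := by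
  rw [phase, phase, ← Complex.exp_conj]
  congr 1
  have h1 : (∑ j, α j * ((-x) j : ℝ)) = -(∑ j, α j * (x j : ℝ)) := by
    rw [← Finset.sum_neg_distrib]
    refine Finset.sum_congr rfl fun j _ => ?_
    simp [mul_neg]
  rw [h1]
  simp only [map_mul, Complex.conj_I, Complex.conj_ofReal, map_ofNat]
  push_cast
  ring

lemma phase_mul {d : ℕ} (α : Fin d → ℝ) (x y : Fin d → ℤ) :
    phase α x * phase α y = phase α (x + y) := by
  rw [phase, phase, phase, ← Complex.exp_add]
  congr 1
  have h1 : (∑ j, α j * ((x + y) j : ℝ)) = (∑ j, α j * (x j : ℝ)) + (∑ j, α j * (y j : ℝ)) := by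
    rw [← Finset.sum_add_distrib]
    refine Finset.sum_congr rfl fun j _ => ?_
    have hxy : (x + y) j = x j + y j := rfl
    rw [hxy]
    push_cast
    ring
  rw [h1]
  push_cast
  ring

/-- The quadratic-form sum `S_ε(α,u)`. -/
noncomputable def qS {d k : ℕ} (R : (Fin d → ℤ) → Matrix (Fin k) (Fin k) ℕ)
    (T : Finset (Fin d → ℤ)) (ε : ℂ) (α : Fin d → ℝ) (u : Fin k → ℂ) : ℝ :=
  ∑ x ∈ T, ∑ i, ∑ j, (R x i j : ℝ) * Complex.normSq (u i - ε * (phase α x * u j))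

/-- The weighted Fourier quadratic form `W(α,u)`. -/
noncomputable def qW {d k : ℕ} (R : (Fin d → ℤ) → Matrix (Fin k) (Fin k) ℕ)
    (T : Finset (Fin d → ℤ)) (α : Fin d → ℝ) (u : Fin k → ℂ) : ℂ :=
  ∑ x ∈ T, ∑ i, ∑ j, (R x i j : ℂ) * (phase α x * ((starRingEnd ℂ) (u i) * u j))

lemma qS_nonneg {d k : ℕ} (R : (Fin d → ℤ) → Matrix (Fin k) (Fin k) ℕ)
    (T : Finset (Fin d → ℤ)) (ε : ℂ) (α : Fin d → ℝ) (u : Fin k → ℂ) :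
    0 ≤ qS R T ε α u := by
  refine Finset.sum_nonneg fun x _ => Finset.sum_nonneg fun i _ => Finset.sum_nonneg fun j _ => ?_
  exact mul_nonneg (Nat.cast_nonneg _) (Complex.normSq_nonneg _)

lemma normSq_expand (a b e ε : ℂ) (he : Complex.normSq e = 1) (hε : Complex.normSq ε = 1) :
    Complex.normSq (a - ε * (e * b)) =
      Complex.normSq a + Complex.normSq b - 2 * (ε * (e * ((starRingEnd ℂ) a * b))).re := by
  simp only [Complex.normSq_apply, Complex.sub_re, Complex.sub_im, Complex.mul_re,
    Complex.mul_im, Complex.conj_re, Complex.conj_im] at *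
  linear_combination (b.re * b.re + b.im * b.im) * (ε.re * ε.re + ε.im * ε.im) * he
    + (b.re * b.re + b.im * b.im) * hε

end EigQAux

open EigQAux

set_option maxHeartbeats 1000000 in
/-- **Quadratic eigenvalue bound for `Q(α)`.**
Let `G` be a connected `D`-regular periodic graph on `ℤᵈ × {1,…,k}` with at least one
self-edge at every vertex (so simple random walk is aperiodic), `R x i j` the number
of edges from `(0,i)` to `(x,j)`, and `Q(α) = D⁻¹ ∑_x e^{2πi α·x} R^x`.  There is a
constant `K = K(G) > 0` such that for every `α` with coordinates in `(-1/2, 1/2]`,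
every eigenvalue `λ` of `Q(α)` satisfies `|λ| ≤ 1 - K |α|²`, where `|α| = max_j |α_j|`
(equivalently, `|λ| ≤ 1 - K α_j²` for every `j`). -/
theorem eigenvalue_bound_of_Q (d k D : ℕ) (hD : 0 < D)
    (R : (Fin d → ℤ) → Matrix (Fin k) (Fin k) ℕ)
    (hfin : {x | R x ≠ 0}.Finite)
    (hsym : ∀ x, R (-x) = (R x).transpose)
    (hreg : ∀ i : Fin k, ∑ᶠ x : Fin d → ℤ, ∑ j : Fin k, R x i j = D)
    (hself : ∀ i : Fin k, 0 < R 0 i i)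
    (hconn : ∀ p q : (Fin d → ℤ) × Fin k,
      Relation.ReflTransGen (fun a b => 0 < R (b.1 - a.1) a.2 b.2) p q)
    (Q : (Fin d → ℝ) → Matrix (Fin k) (Fin k) ℂ)
    (hQ : ∀ α, Q α = (D : ℂ)⁻¹ • ∑ᶠ x : Fin d → ℤ,
      Complex.exp (2 * Real.pi * Complex.I * ((∑ j, α j * (x j : ℝ) : ℝ) : ℂ)) •
        (R x).map (fun n => (n : ℂ))) :
    ∃ K : ℝ, 0 < K ∧ ∀ (α : Fin d → ℝ), (∀ j, α j ∈ Set.Ioc (-(1/2) : ℝ) (1/2)) →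
      ∀ (u : Fin k → ℂ) (lam : ℂ), u ≠ 0 → (Q α).mulVec u = lam • u →
        ∀ j : Fin d, ‖lam‖ ≤ 1 - K * (α j) ^ 2 := by
  classical
  obtain ⟨T, hmemT⟩ : ∃ T : Finset (Fin d → ℤ), ∀ x, x ∈ T ↔ R x ≠ 0 :=
    ⟨hfin.toFinset, fun x => hfin.mem_toFinset⟩
  have hnegT : ∀ x, x ∈ T → -x ∈ T := by
    intro x hx
    rw [hmemT] at hx ⊢
    rw [hsym x]
    intro h
    apply hx
    ext i j
    have := congrFun (congrFun h j) i
    simpa [Matrix.transpose_apply] using this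
  -- row sums
  have hrowN : ∀ i, ∑ x ∈ T, ∑ j, R x i j = D := by
    intro i
    rw [← hreg i]
    refine (finsum_eq_sum_of_support_subset _ ?_).symm
    intro x hx
    simp only [Function.mem_support] at hx
    have : R x ≠ 0 := by
      intro h; apply hx; simp [h]
    simpa [hmemT] using this
  have hrow : ∀ i, ∑ x ∈ T, ∑ j, (R x i j : ℝ) = D := by
    intro i
    rw [← hrowN i]
    push_cast
    ring
  have hcol : ∀ j, ∑ x ∈ T, ∑ i, (R x i j : ℝ) = D := by
    intro j
    have hswap : ∑ x ∈ T, ∑ i, (R x i j : ℝ) = ∑ x ∈ T, ∑ i, (R (-x) i j : ℝ) := by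
      refine Finset.sum_nbij' (fun x => -x) (fun x => -x) ?_ ?_ ?_ ?_ ?_
      · intro x hx; exact hnegT x hx
      · intro x hx; exact hnegT x hx
      · intro x _; simp
      · intro x _; simp
      · intro x _; simp
    rw [hswap]
    have hconv : ∀ x : Fin d → ℤ, ∑ i, (R (-x) i j : ℝ) = ∑ i, (R x j i : ℝ) := by
      intro x
      refine Finset.sum_congr rfl fun i _ => ?_
      rw [hsym x]
      simp [Matrix.transpose_apply]
    simp_rw [hconv]
    exact hrow j
  -- entries of Q
  have hQentry : ∀ (α : Fin d → ℝ) (i j : Fin k),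
      Q α i j = (D : ℂ)⁻¹ * ∑ x ∈ T, phase α x * (R x i j : ℂ) := by
    intro α i j
    have hfs : (∑ᶠ x : Fin d → ℤ,
        Complex.exp (2 * Real.pi * Complex.I * ((∑ j, α j * (x j : ℝ) : ℝ) : ℂ)) •
          (R x).map (fun n => (n : ℂ)))
        = ∑ x ∈ T, phase α x • (R x).map (fun n => (n : ℂ)) := by
      refine finsum_eq_sum_of_support_subset _ ?_
      intro x hx
      simp only [Function.mem_support] at hx
      have : R x ≠ 0 := by
        intro h
        apply hx
        rw [h]
        rw [show ((0 : Matrix (Fin k) (Fin k) ℕ)).map (fun n => ((n : ℂ))) = 0 by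
          ext i j; simp]
        simp
      simpa [hmemT] using this
    rw [hQ α, hfs]
    simp only [Matrix.smul_apply, Matrix.sum_apply, Matrix.map_apply, smul_eq_mul]
  -- the single-step bound
  have step_bound : ∀ (a b : (Fin d → ℤ) × Fin k), 0 < R (b.1 - a.1) a.2 b.2 →
      ∀ (α : Fin d → ℝ) (u : Fin k → ℂ),
      ‖phase α b.1 * u b.2 - phase α a.1 * u a.2‖ ≤
        Real.sqrt (qS R T 1 α u) := by
    intro a b hab α u
    set x := b.1 - a.1 with hxdef
    have hxT : x ∈ T := by
      rw [hmemT]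
      intro h
      rw [h] at hab
      simp at hab
    have hb1 : b.1 = a.1 + x := by rw [hxdef]; abel
    have hfac : phase α b.1 * u b.2 - phase α a.1 * u a.2
        = phase α a.1 * (phase α x * u b.2 - u a.2) := by
      rw [hb1, ← phase_mul]
      ring
    rw [hfac, norm_mul, abs_phase, one_mul,
      show phase α x * u b.2 - u a.2 = -(u a.2 - 1 * (phase α x * u b.2)) by ring,
      norm_neg]
    apply Real.le_sqrt_of_sq_le
    rw [Complex.sq_norm]
    have hterm : Complex.normSq (u a.2 - 1 * (phase α x * u b.2)) ≤
        (R x a.2 b.2 : ℝ) * Complex.normSq (u a.2 - 1 * (phase α x * u b.2)) := by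
      have h1 : (1 : ℝ) ≤ (R x a.2 b.2 : ℝ) := by exact_mod_cast hab
      nlinarith [Complex.normSq_nonneg (u a.2 - 1 * (phase α x * u b.2))]
    refine hterm.trans ?_
    have h1 : (R x a.2 b.2 : ℝ) * Complex.normSq (u a.2 - 1 * (phase α x * u b.2)) ≤
        ∑ j, (R x a.2 j : ℝ) * Complex.normSq (u a.2 - 1 * (phase α x * u j)) :=
      Finset.single_le_sum
        (f := fun j => (R x a.2 j : ℝ) * Complex.normSq (u a.2 - 1 * (phase α x * u j)))
        (fun j _ => mul_nonneg (Nat.cast_nonneg _) (Complex.normSq_nonneg _)) (Finset.mem_univ b.2)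
    refine h1.trans ?_
    have h2 : ∑ j, (R x a.2 j : ℝ) * Complex.normSq (u a.2 - 1 * (phase α x * u j)) ≤
        ∑ i, ∑ j, (R x i j : ℝ) * Complex.normSq (u i - 1 * (phase α x * u j)) :=
      Finset.single_le_sum
        (f := fun i => ∑ j, (R x i j : ℝ) * Complex.normSq (u i - 1 * (phase α x * u j)))
        (fun i _ => Finset.sum_nonneg fun j _ => mul_nonneg (Nat.cast_nonneg _) (Complex.normSq_nonneg _)) (Finset.mem_univ a.2)
    refine h2.trans ?_
    exact Finset.single_le_sum
      (f := fun y => ∑ i, ∑ j, (R y i j : ℝ) * Complex.normSq (u i - 1 * (phase α y * u j)))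
      (fun y _ => Finset.sum_nonneg fun i _ => Finset.sum_nonneg fun j _ => mul_nonneg (Nat.cast_nonneg _) (Complex.normSq_nonneg _)) hxT
  -- telescoping along paths
  have tele : ∀ p q : (Fin d → ℤ) × Fin k,
      Relation.ReflTransGen (fun a b => 0 < R (b.1 - a.1) a.2 b.2) p q →
      ∃ n : ℕ, ∀ (α : Fin d → ℝ) (u : Fin k → ℂ),
        ‖phase α q.1 * u q.2 - phase α p.1 * u p.2‖ ≤
          n * Real.sqrt (qS R T 1 α u) := by
    intro p q h
    induction h with
    | refl => exact ⟨0, fun α u => by simp⟩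
    | @tail b c hpb hbc ih =>
      obtain ⟨n, hn⟩ := ih
      refine ⟨n + 1, fun α u => ?_⟩
      have h1 := hn α u
      have h2 := step_bound b c hbc α u
      have htri : ‖phase α c.1 * u c.2 - phase α p.1 * u p.2‖ ≤
          ‖phase α c.1 * u c.2 - phase α b.1 * u b.2‖ +
          ‖phase α b.1 * u b.2 - phase α p.1 * u p.2‖ := by
        simpa using norm_sub_le_norm_sub_add_norm_sub (phase α c.1 * u c.2) (phase α b.1 * u b.2)
          (phase α p.1 * u p.2)
      push_cast
      linarith
  -- choose path lengths for each class and direction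
  have epath : ∀ (i : Fin k) (j : Fin d), ∃ n : ℕ, ∀ (α : Fin d → ℝ) (u : Fin k → ℂ),
      ‖phase α (fun l => if l = j then 1 else 0) * u i - phase α 0 * u i‖ ≤
        n * Real.sqrt (qS R T 1 α u) := by
    intro i j
    exact tele (0, i) ((fun l => if l = j then 1 else 0), i) (hconn _ _)
  choose nfun hnfun using epath
  obtain ⟨N, hnN⟩ : ∃ N : ℕ, ∀ i j, nfun i j ≤ N :=
    ⟨Finset.univ.sup (fun p : Fin k × Fin d => nfun p.1 p.2), fun i j =>
      Finset.le_sup (f := fun p : Fin k × Fin d => nfun p.1 p.2) (Finset.mem_univ (i, j))⟩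
  -- the identity for qS
  have hqS : ∀ (ε : ℂ), Complex.normSq ε = 1 → ∀ (α : Fin d → ℝ) (u : Fin k → ℂ),
      qS R T ε α u =
        2 * D * (∑ i, Complex.normSq (u i)) - 2 * (ε * qW R T α u).re := by
    intro ε hε α u
    have hterm : ∀ (x : Fin d → ℤ) (i j' : Fin k),
        (R x i j' : ℝ) * Complex.normSq (u i - ε * (phase α x * u j'))
        = (R x i j' : ℝ) * Complex.normSq (u i) + (R x i j' : ℝ) * Complex.normSq (u j')
          - 2 * ((R x i j' : ℂ) * (ε * (phase α x * ((starRingEnd ℂ) (u i) * u j')))).re := by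
      intro x i j'
      rw [normSq_expand _ _ _ _ (normSq_phase α x) hε]
      rw [show ((R x i j' : ℕ) : ℂ) = ((R x i j' : ℝ) : ℂ) by push_cast; ring,
        Complex.re_ofReal_mul]
      ring
    have hsplit : qS R T ε α u =
        (∑ x ∈ T, ∑ i, ∑ j', (R x i j' : ℝ) * Complex.normSq (u i))
        + (∑ x ∈ T, ∑ i, ∑ j', (R x i j' : ℝ) * Complex.normSq (u j'))
        - 2 * (∑ x ∈ T, ∑ i, ∑ j',
            ((R x i j' : ℂ) * (ε * (phase α x * ((starRingEnd ℂ) (u i) * u j')))).re) := by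
      rw [qS]
      rw [Finset.mul_sum, ← Finset.sum_add_distrib, ← Finset.sum_sub_distrib]
      refine Finset.sum_congr rfl fun x _ => ?_
      rw [Finset.mul_sum, ← Finset.sum_add_distrib, ← Finset.sum_sub_distrib]
      refine Finset.sum_congr rfl fun i _ => ?_
      rw [Finset.mul_sum, ← Finset.sum_add_distrib, ← Finset.sum_sub_distrib]
      refine Finset.sum_congr rfl fun j' _ => ?_
      exact hterm x i j'
    have hA : ∑ x ∈ T, ∑ i, ∑ j', (R x i j' : ℝ) * Complex.normSq (u i)
        = D * ∑ i, Complex.normSq (u i) := by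
      rw [Finset.sum_comm]
      have hAi : ∀ i : Fin k, ∑ x ∈ T, ∑ j', (R x i j' : ℝ) * Complex.normSq (u i)
          = Complex.normSq (u i) * D := by
        intro i
        rw [← hrow i, Finset.mul_sum]
        refine Finset.sum_congr rfl fun x _ => ?_
        rw [Finset.mul_sum]
        refine Finset.sum_congr rfl fun j' _ => ?_
        ring
      simp_rw [hAi]
      rw [Finset.mul_sum]
      refine Finset.sum_congr rfl fun i _ => ?_
      ring
    have hB : ∑ x ∈ T, ∑ i, ∑ j', (R x i j' : ℝ) * Complex.normSq (u j')
        = D * ∑ i, Complex.normSq (u i) := by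
      have hx1 : ∀ x : Fin d → ℤ, ∑ i, ∑ j', (R x i j' : ℝ) * Complex.normSq (u j')
          = ∑ j', ∑ i, (R x i j' : ℝ) * Complex.normSq (u j') := fun x => Finset.sum_comm
      simp_rw [hx1]
      rw [Finset.sum_comm]
      have hBj : ∀ j' : Fin k, ∑ x ∈ T, ∑ i, (R x i j' : ℝ) * Complex.normSq (u j')
          = Complex.normSq (u j') * D := by
        intro j'
        rw [← hcol j', Finset.mul_sum]
        refine Finset.sum_congr rfl fun x _ => ?_
        rw [Finset.mul_sum]
        refine Finset.sum_congr rfl fun i _ => ?_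
        ring
      simp_rw [hBj]
      rw [Finset.mul_sum]
      refine Finset.sum_congr rfl fun j' _ => ?_
      ring
    have hC : ∑ x ∈ T, ∑ i, ∑ j',
        ((R x i j' : ℂ) * (ε * (phase α x * ((starRingEnd ℂ) (u i) * u j')))).re
        = (ε * qW R T α u).re := by
      rw [qW, Finset.mul_sum, Complex.re_sum]
      refine Finset.sum_congr rfl fun x _ => ?_
      rw [Finset.mul_sum, Complex.re_sum]
      refine Finset.sum_congr rfl fun i _ => ?_
      rw [Finset.mul_sum, Complex.re_sum]
      refine Finset.sum_congr rfl fun j' _ => ?_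
      congr 1
      ring
    rw [hsplit, hA, hB, hC]
    ring
  -- hermitian symmetry of W
  have hconjW : ∀ (α : Fin d → ℝ) (u : Fin k → ℂ),
      (starRingEnd ℂ) (qW R T α u) = qW R T α u := by
    intro α u
    rw [qW, map_sum]
    have h1 : ∀ x : Fin d → ℤ,
        (starRingEnd ℂ) (∑ i, ∑ j, (R x i j : ℂ) * (phase α x * ((starRingEnd ℂ) (u i) * u j)))
        = ∑ i, ∑ j, (R x i j : ℂ) * (phase α (-x) * (u i * (starRingEnd ℂ) (u j))) := by
      intro x
      rw [map_sum]
      refine Finset.sum_congr rfl fun i _ => ?_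
      rw [map_sum]
      refine Finset.sum_congr rfl fun j _ => ?_
      simp only [map_mul, Complex.conj_conj, conj_phase, map_natCast]
    simp_rw [h1]
    have h2 : ∑ x ∈ T, ∑ i, ∑ j, (R x i j : ℂ) * (phase α (-x) * (u i * (starRingEnd ℂ) (u j)))
        = ∑ x ∈ T, ∑ i, ∑ j, (R (-x) i j : ℂ) * (phase α x * (u i * (starRingEnd ℂ) (u j))) := by
      refine Finset.sum_nbij' (fun x => -x) (fun x => -x) ?_ ?_ ?_ ?_ ?_
      · intro x hx; exact hnegT x hx
      · intro x hx; exact hnegT x hx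
      · intro x _; simp
      · intro x _; simp
      · intro x _; simp
    rw [h2]
    refine Finset.sum_congr rfl fun x _ => ?_
    have h3 : ∀ i j : Fin k, (R (-x) i j : ℂ) = (R x j i : ℂ) := by
      intro i j
      rw [hsym x]
      simp [Matrix.transpose_apply]
    simp_rw [h3]
    rw [Finset.sum_comm]
    refine Finset.sum_congr rfl fun i _ => ?_
    refine Finset.sum_congr rfl fun j _ => ?_
    ring
  -- the constant
  obtain ⟨K, hKdef⟩ : ∃ K : ℝ, K = 8 / (D * (k + 1) * (N + 1) ^ 2) := ⟨_, rfl⟩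
  refine ⟨K, by rw [hKdef]; positivity, ?_⟩
  have hKpos : 0 < K := by rw [hKdef]; positivity
  intro α hα u lam hu hev j
  obtain ⟨nsq, hnsqdef⟩ : ∃ s : ℝ, s = ∑ i, Complex.normSq (u i) := ⟨_, rfl⟩
  have hex : ∃ i, u i ≠ 0 := by
    by_contra h
    push_neg at h
    exact hu (funext h)
  obtain ⟨i₀, hi₀⟩ := hex
  have hnsqpos : 0 < nsq := by
    rw [hnsqdef]
    refine Finset.sum_pos' (fun i _ => Complex.normSq_nonneg _) ⟨i₀, Finset.mem_univ _, ?_⟩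
    exact Complex.normSq_pos.mpr hi₀
  have hDr : (0 : ℝ) < D := by exact_mod_cast hD
  -- the inner-product identity : W = D * lam * nsq
  have hipW : qW R T α u = (D : ℂ) * (lam * (nsq : ℂ)) := by
    have h1 : ∑ i, (starRingEnd ℂ) (u i) * ((Q α).mulVec u i) = lam * (nsq : ℂ) := by
      rw [hev]
      simp only [Pi.smul_apply, smul_eq_mul]
      rw [show ∑ i, (starRingEnd ℂ) (u i) * (lam * u i)
          = lam * ∑ i, (starRingEnd ℂ) (u i) * u i by
        rw [Finset.mul_sum]; exact Finset.sum_congr rfl fun i _ => by ring]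
      congr 1
      rw [hnsqdef]
      push_cast
      exact Finset.sum_congr rfl fun i _ => Complex.normSq_eq_conj_mul_self.symm
    have h2 : ∑ i, (starRingEnd ℂ) (u i) * ((Q α).mulVec u i) = (D : ℂ)⁻¹ * qW R T α u := by
      have e1 : ∀ i : Fin k, (starRingEnd ℂ) (u i) * ((Q α).mulVec u i)
          = (D : ℂ)⁻¹ * ∑ j', ∑ x ∈ T,
              (R x i j' : ℂ) * (phase α x * ((starRingEnd ℂ) (u i) * u j')) := by
        intro i
        rw [Matrix.mulVec, dotProduct, Finset.mul_sum, Finset.mul_sum]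
        refine Finset.sum_congr rfl fun j' _ => ?_
        rw [hQentry α i j']
        rw [show (starRingEnd ℂ) (u i) * ((D : ℂ)⁻¹ * (∑ x ∈ T, phase α x * (R x i j' : ℂ)) * u j')
            = (D : ℂ)⁻¹ * ((∑ x ∈ T, phase α x * (R x i j' : ℂ)) * ((starRingEnd ℂ) (u i) * u j'))
            by ring, Finset.sum_mul]
        congr 1
        refine Finset.sum_congr rfl fun x _ => ?_
        ring
      simp_rw [e1]
      rw [← Finset.mul_sum]
      congr 1
      rw [qW]
      have hsw1 : ∀ i : Fin k, ∑ j' : Fin k, ∑ x ∈ T,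
          (R x i j' : ℂ) * (phase α x * ((starRingEnd ℂ) (u i) * u j'))
          = ∑ x ∈ T, ∑ j' : Fin k,
          (R x i j' : ℂ) * (phase α x * ((starRingEnd ℂ) (u i) * u j')) :=
        fun i => Finset.sum_comm
      simp_rw [hsw1]
      exact Finset.sum_comm
    rw [h2] at h1
    have hDne : (D : ℂ) ≠ 0 := Nat.cast_ne_zero.mpr hD.ne'
    rwa [inv_mul_eq_iff_eq_mul₀ hDne] at h1
  -- lam is real
  have hlamreal : lam = (lam.re : ℂ) := by
    have h1 := hconjW α u
    rw [hipW] at h1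
    simp only [map_mul, Complex.conj_ofReal, map_natCast] at h1
    have h2 : (starRingEnd ℂ) lam = lam := by
      have hne : ((D : ℂ) * (nsq : ℂ)) ≠ 0 := by
        apply mul_ne_zero
        · exact_mod_cast hDr.ne'
        · exact_mod_cast hnsqpos.ne'
      have h3 : (D : ℂ) * ((starRingEnd ℂ) lam * (nsq : ℂ))
          = (D : ℂ) * (lam * (nsq : ℂ)) := h1
      have hDne : (D : ℂ) ≠ 0 := Nat.cast_ne_zero.mpr hD.ne'
      have hnne : ((nsq : ℝ) : ℂ) ≠ 0 := Complex.ofReal_ne_zero.mpr hnsqpos.ne'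
      have h4 := mul_left_cancel₀ hDne h3
      exact mul_right_cancel₀ hnne h4
    exact (Complex.conj_eq_iff_re.mp h2).symm
  set r : ℝ := lam.re with hrdef
  -- values of the quadratic sums
  have hcast1 : (D : ℂ) * (((r : ℝ) : ℂ) * ((nsq : ℝ) : ℂ)) = (((D * r * nsq : ℝ)) : ℂ) := by
    push_cast
    ring
  have hre1 : ((1 : ℂ) * qW R T α u).re = D * r * nsq := by
    rw [one_mul, hipW, hlamreal, hcast1, Complex.ofReal_re]
  have hcast2 : (-1 : ℂ) * ((D : ℂ) * (((r : ℝ) : ℂ) * ((nsq : ℝ) : ℂ)))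
      = (((-(D * r * nsq) : ℝ)) : ℂ) := by
    push_cast
    ring
  have hrem1 : (((-1) : ℂ) * qW R T α u).re = -(D * r * nsq) := by
    rw [hipW, hlamreal, hcast2, Complex.ofReal_re]
  have hSm : qS R T 1 α u = 2 * D * nsq - 2 * (D * r * nsq) := by
    rw [hqS 1 (by simp) α u, hre1, hnsqdef]
  have hSp : qS R T (-1) α u = 2 * D * nsq + 2 * (D * r * nsq) := by
    rw [hqS (-1) (by simp) α u, hrem1, hnsqdef]
    ring
  -- r ≤ 1
  have hr1 : r ≤ 1 := by
    have h0 := qS_nonneg R T 1 α u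
    rw [hSm] at h0
    nlinarith [mul_pos hDr hnsqpos]
  -- the "+" bound : 1 + r ≥ 2 / D
  have hplus : 2 ≤ D * (1 + r) := by
    have h0T : (0 : Fin d → ℤ) ∈ T := by
      rw [hmemT]
      intro h
      have := hself i₀
      rw [h] at this
      simp at this
    have hlow : 4 * nsq ≤ qS R T (-1) α u := by
      have hinner : ∀ i : Fin k, 4 * Complex.normSq (u i)
          ≤ ∑ j', (R 0 i j' : ℝ) * Complex.normSq (u i - (-1) * (phase α 0 * u j')) := by
        intro i
        have hsingle : (R 0 i i : ℝ) * Complex.normSq (u i - (-1) * (phase α 0 * u i))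
            ≤ ∑ j', (R 0 i j' : ℝ) * Complex.normSq (u i - (-1) * (phase α 0 * u j')) :=
          Finset.single_le_sum
            (f := fun j' => (R 0 i j' : ℝ) * Complex.normSq (u i - (-1) * (phase α 0 * u j')))
            (fun j' _ => mul_nonneg (Nat.cast_nonneg _) (Complex.normSq_nonneg _)) (Finset.mem_univ i)
        refine le_trans ?_ hsingle
        rw [phase_zero]
        rw [show u i - (-1) * (1 * u i) = 2 * u i by ring]
        rw [Complex.normSq_mul]
        have h1 : (1 : ℝ) ≤ (R 0 i i : ℝ) := by exact_mod_cast hself i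
        have h2 : Complex.normSq 2 = 4 := by
          simp [Complex.normSq_apply]
          norm_num
        rw [h2]
        nlinarith [Complex.normSq_nonneg (u i)]
      have houter : ∑ i, 4 * Complex.normSq (u i)
          ≤ ∑ i, ∑ j', (R 0 i j' : ℝ) * Complex.normSq (u i - (-1) * (phase α 0 * u j')) :=
        Finset.sum_le_sum fun i _ => hinner i
      have hfull : ∑ i, ∑ j', (R 0 i j' : ℝ) * Complex.normSq (u i - (-1) * (phase α 0 * u j'))
          ≤ qS R T (-1) α u := by
        rw [qS]
        refine Finset.single_le_sum
          (f := fun x => ∑ i, ∑ j', (R x i j' : ℝ) *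
            Complex.normSq (u i - (-1) * (phase α x * u j')))
          (fun y _ => Finset.sum_nonneg fun i _ => Finset.sum_nonneg fun j' _ => mul_nonneg (Nat.cast_nonneg _) (Complex.normSq_nonneg _)) h0T
      calc 4 * nsq = ∑ i, 4 * Complex.normSq (u i) := by rw [hnsqdef, Finset.mul_sum]
        _ ≤ _ := houter.trans hfull
    rw [hSp] at hlow
    nlinarith
  -- the "-" bound via the path
  have hkpos : 0 < k := Fin.pos i₀
  -- pick the coordinate with maximal |u|
  have hmax : ∃ c : Fin k, ∀ i, Complex.normSq (u i) ≤ Complex.normSq (u c) := by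
    obtain ⟨c, _, hc⟩ := Finset.exists_max_image Finset.univ (fun i => Complex.normSq (u i))
      ⟨i₀, Finset.mem_univ i₀⟩
    exact ⟨c, fun i => hc i (Finset.mem_univ i)⟩
  obtain ⟨c, hc⟩ := hmax
  have hncpos : 0 < Complex.normSq (u c) :=
    lt_of_lt_of_le (Complex.normSq_pos.mpr hi₀) (hc i₀)
  have hnsqle : nsq ≤ k * Complex.normSq (u c) := by
    rw [hnsqdef]
    calc ∑ i, Complex.normSq (u i) ≤ ∑ _i : Fin k, Complex.normSq (u c) :=
          Finset.sum_le_sum fun i _ => hc i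
      _ = k * Complex.normSq (u c) := by
          rw [Finset.sum_const, Finset.card_univ, Fintype.card_fin, nsmul_eq_mul]
  -- the phase lower bound
  have hαj := hα j
  obtain ⟨hαjl, hαjr⟩ := hαj
  have hαabs : |α j| ≤ 1 / 2 := by
    rw [abs_le]
    constructor <;> linarith
  have hphaselow : 16 * (α j) ^ 2 ≤ Complex.normSq (phase α (fun l => if l = j then 1 else 0) - 1) := by
    have hL : (∑ l, α l * (((fun l => if l = j then 1 else 0) : Fin d → ℤ) l : ℝ)) = α j := by
      rw [Fintype.sum_eq_single j]
      · simp
      · intro l hl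
        simp [hl]
    have hphase : phase α (fun l => if l = j then 1 else 0)
        = Complex.exp ((((2 * Real.pi * α j) : ℝ) : ℂ) * Complex.I) := by
      unfold phase
      rw [hL]
      push_cast
      ring_nf
    rw [hphase]
    have hre : (Complex.exp ((((2 * Real.pi * α j) : ℝ) : ℂ) * Complex.I) - 1).re
        = Real.cos (2 * Real.pi * α j) - 1 := by
      rw [Complex.sub_re, Complex.exp_ofReal_mul_I_re, Complex.one_re]
    have him : (Complex.exp ((((2 * Real.pi * α j) : ℝ) : ℂ) * Complex.I) - 1).im
        = Real.sin (2 * Real.pi * α j) := by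
      rw [Complex.sub_im, Complex.exp_ofReal_mul_I_im, Complex.one_im]
      ring
    rw [Complex.normSq_apply, hre, him]
    have hpyth := Real.sin_sq_add_cos_sq (2 * Real.pi * α j)
    have hcosb : Real.cos (2 * Real.pi * α j) ≤ 1 - 2 / Real.pi ^ 2 * (2 * Real.pi * α j) ^ 2 := by
      apply Real.cos_le_one_sub_mul_cos_sq
      have habs2 : |2 * Real.pi * α j| = (2 * Real.pi) * |α j| := by
        rw [abs_mul (2 * Real.pi) (α j),
          _root_.abs_of_nonneg (by positivity : (0:ℝ) ≤ 2 * Real.pi)]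
      rw [habs2]
      nlinarith [Real.pi_pos, hαabs, abs_nonneg (α j)]
    have hpi2 : (0 : ℝ) < Real.pi ^ 2 := by positivity
    have hexp : 2 / Real.pi ^ 2 * (2 * Real.pi * α j) ^ 2 = 8 * (α j) ^ 2 := by
      field_simp
      ring
    rw [hexp] at hcosb
    nlinarith
  -- combine with the telescoping bound
  have hpathbound := hnfun c j α u
  obtain ⟨n, hndef⟩ : ∃ n : ℕ, n = nfun c j := ⟨_, rfl⟩
  rw [← hndef] at hpathbound
  have h16 : 16 * (α j) ^ 2 * Complex.normSq (u c) ≤ (n : ℝ) ^ 2 * qS R T 1 α u := by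
    have hlhs : ‖phase α (fun l => if l = j then 1 else 0) * u c - phase α 0 * u c‖
        = ‖phase α (fun l => if l = j then 1 else 0) - 1‖ * ‖u c‖ := by
      rw [phase_zero, show phase α (fun l => if l = j then 1 else 0) * u c - 1 * u c
        = (phase α (fun l => if l = j then 1 else 0) - 1) * u c by ring, norm_mul]
    rw [hlhs] at hpathbound
    have hsq : (‖phase α (fun l => if l = j then 1 else 0) - 1‖ * ‖u c‖) ^ 2
        ≤ ((n : ℝ) * Real.sqrt (qS R T 1 α u)) ^ 2 := by
      apply sq_le_sq'
      · have := mul_nonneg (norm_nonneg (phase α (fun l => if l = j then 1 else 0) - 1))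
          (norm_nonneg (u c))
        have hns : (0:ℝ) ≤ (n : ℝ) * Real.sqrt (qS R T 1 α u) := by positivity
        linarith
      · exact hpathbound
    rw [mul_pow, mul_pow, Complex.sq_norm, Complex.sq_norm,
      Real.sq_sqrt (qS_nonneg R T 1 α u)] at hsq
    nlinarith [Complex.normSq_nonneg (u c), hphaselow,
      Complex.normSq_nonneg (phase α (fun l => if l = j then 1 else 0) - 1)]
  rw [hSm] at h16
  -- 16 αj² ≤ 2 D k n² (1 - r)
  have hsum16 : 16 * (α j) ^ 2 ≤ 2 * D * k * (n : ℝ) ^ 2 * (1 - r) := by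
    have h1r : (0 : ℝ) ≤ 1 - r := by linarith
    have hstep : (n : ℝ) ^ 2 * (2 * D * nsq - 2 * (D * r * nsq))
        ≤ 2 * D * k * (n : ℝ) ^ 2 * (1 - r) * Complex.normSq (u c) := by
      have : 2 * D * nsq - 2 * (D * r * nsq) = 2 * D * nsq * (1 - r) := by ring
      rw [this]
      have hkn : nsq * (1 - r) ≤ (k * Complex.normSq (u c)) * (1 - r) :=
        mul_le_mul_of_nonneg_right hnsqle h1r
      have hmn := mul_le_mul_of_nonneg_left hkn
        (show (0:ℝ) ≤ 2 * (D:ℝ) * (n:ℝ)^2 by positivity)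
      nlinarith [hmn]
    have h2 : 16 * (α j) ^ 2 * Complex.normSq (u c)
        ≤ 2 * D * k * (n : ℝ) ^ 2 * (1 - r) * Complex.normSq (u c) := le_trans h16 hstep
    exact le_of_mul_le_mul_right (by linarith [h2]) hncpos
  -- final bounds
  have hnNr : (n : ℝ) ≤ N := by rw [hndef]; exact_mod_cast hnN c j
  have hnnonneg : (0 : ℝ) ≤ (n : ℝ) := Nat.cast_nonneg n
  have hNnonneg : (0 : ℝ) ≤ (N : ℝ) := Nat.cast_nonneg N
  have hkr : (0 : ℝ) < k := by exact_mod_cast hkpos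
  have hKval : K = 8 / (D * (k + 1) * (N + 1) ^ 2) := hKdef
  have hdenompos : (0 : ℝ) < D * (k + 1) * (N + 1) ^ 2 := by positivity
  -- upper bound : r ≤ 1 - K αj²
  have hup : K * (α j) ^ 2 ≤ 1 - r := by
    have h1r : (0 : ℝ) ≤ 1 - r := by linarith
    have hKn : K * (2 * D * k * (n : ℝ) ^ 2) ≤ 16 := by
      rw [hKval]
      rw [div_mul_eq_mul_div, div_le_iff₀ hdenompos]
      have hn1 : (n : ℝ) ^ 2 ≤ ((N : ℝ) + 1) ^ 2 := by nlinarith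
      have hx1 : (k : ℝ) * (n : ℝ) ^ 2 ≤ ((k : ℝ) + 1) * ((N : ℝ) + 1) ^ 2 := by
        nlinarith [mul_le_mul_of_nonneg_left hn1 hkr.le, sq_nonneg ((N:ℝ)+1)]
      have hx2 := mul_le_mul_of_nonneg_left hx1 hDr.le
      nlinarith [hx2]
    have hmul : K * (16 * (α j) ^ 2) ≤ K * (2 * D * k * (n : ℝ) ^ 2 * (1 - r)) :=
      mul_le_mul_of_nonneg_left hsum16 hKpos.le
    have : K * (2 * D * k * (n : ℝ) ^ 2 * (1 - r)) ≤ 16 * (1 - r) := by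
      rw [show K * (2 * D * k * (n : ℝ) ^ 2 * (1 - r)) = K * (2 * D * k * (n : ℝ) ^ 2) * (1 - r)
        by ring]
      exact mul_le_mul_of_nonneg_right hKn h1r
    linarith [hmul, this]
  -- lower bound : -(1 - K αj²) ≤ r
  have hdown : K * (α j) ^ 2 ≤ 1 + r := by
    have hsq4 : (α j) ^ 2 ≤ 1 / 4 := by
      have h := sq_le_sq' (by linarith : -(1/2 : ℝ) ≤ α j) hαjr
      norm_num at h
      linarith
    have hK4 : K * (1 / 4) ≤ 2 / D := by
      rw [hKval]
      rw [div_mul_eq_mul_div, div_le_div_iff₀ hdenompos hDr]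
      have hN0 : (0 : ℝ) ≤ (N : ℝ) := Nat.cast_nonneg N
      have hk0 : (0 : ℝ) ≤ (k : ℝ) := Nat.cast_nonneg k
      have h1 : (1 : ℝ) ≤ (k : ℝ) + 1 := by linarith
      have h2 : (1 : ℝ) ≤ ((N : ℝ) + 1) ^ 2 := by
        have : (1 : ℝ) ≤ (N : ℝ) + 1 := by linarith
        calc (1 : ℝ) = 1 ^ 2 := by norm_num
          _ ≤ ((N : ℝ) + 1) ^ 2 := by
            apply pow_le_pow_left₀ (by norm_num) this 2
      have h3 : (1 : ℝ) ≤ ((k : ℝ) + 1) * ((N : ℝ) + 1) ^ 2 := by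
        calc (1 : ℝ) = 1 * 1 := by norm_num
          _ ≤ ((k : ℝ) + 1) * ((N : ℝ) + 1) ^ 2 :=
            mul_le_mul h1 h2 (by norm_num) (by linarith)
      have h4 := mul_le_mul_of_nonneg_left h3 hDr.le
      linarith [h4]
    have h2D : 2 / (D : ℝ) ≤ 1 + r := by
      rw [div_le_iff₀ hDr]
      linarith [hplus]
    have : K * (α j) ^ 2 ≤ K * (1 / 4) := mul_le_mul_of_nonneg_left hsq4 hKpos.le
    linarith
  -- conclude
  rw [hlamreal]
  rw [Complex.norm_real, Real.norm_eq_abs]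
  rw [abs_le]
  constructor <;> [linarith; linarith]
end
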